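/- arXiv:1103.2578 — 9 statements merged into one kernel-verified Lean document; each statement's English description precedes it below -/
import Mathlib

section
/- The average mixing matrix of a graph equals the sum of the entrywise (Schur) squares of the spectral idempotents: if A = Σ_r θ_r E_r is the spectral decomposition of the adjacency matrix, then lim_{C→∞} (1/C)∫_0^C (exp(itA) ∘ exp(-itA)) dt = Σ_r E_r ∘ E_r. -/
open Matrix Filter

section Aux

variable {n m : ℕ}

lemma mapC_mul (M N : Matrix (Fin n) (Fin n) ℝ) :
    (M.map Complex.ofReal) * (N.map Complex.ofReal) = (M * N).map Complex.ofReal := by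
  ext i j
  simp [Matrix.mul_apply, Matrix.map_apply]

/-- Powers of a "spectral" combination. -/
lemma spec_pow (F : Fin m → Matrix (Fin n) (Fin n) ℂ)
    (hid : ∀ r, F r * F r = F r) (hor : ∀ r s, r ≠ s → F r * F s = 0)
    (hs : ∑ r, F r = 1) (c : Fin m → ℂ) (k : ℕ) :
    (∑ r, c r • F r) ^ k = ∑ r, (c r) ^ k • F r := by
  induction k with
  | zero => simp [hs]
  | succ k ih =>
    rw [pow_succ, ih, Finset.sum_mul_sum]
    refine Finset.sum_congr rfl fun r _ => ?_
    rw [Finset.sum_eq_single r]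
    · rw [smul_mul_assoc, mul_smul_comm, hid r, smul_smul, pow_succ]
    · intro s _ hsr
      rw [smul_mul_assoc, mul_smul_comm, hor r s (Ne.symm hsr), smul_zero, smul_zero]
    · intro h; exact absurd (Finset.mem_univ r) h

set_option maxHeartbeats 1000000 in
lemma spec_exp (F : Fin m → Matrix (Fin n) (Fin n) ℂ)
    (hid : ∀ r, F r * F r = F r) (hor : ∀ r s, r ≠ s → F r * F s = 0)
    (hs : ∑ r, F r = 1) (c : Fin m → ℂ) :
    NormedSpace.exp (∑ r, c r • F r) = ∑ r, Complex.exp (c r) • F r := by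
  rw [NormedSpace.exp_eq_tsum (𝕂 := ℂ)]
  have h1 : ∀ k : ℕ, ((k.factorial : ℂ)⁻¹) • (∑ r, c r • F r) ^ k
      = ∑ r, (((k.factorial : ℂ)⁻¹) * c r ^ k) • F r := by
    intro k
    rw [spec_pow F hid hor hs c k, Finset.smul_sum]
    simp [smul_smul]
  have hsummable : ∀ r : Fin m, Summable fun k : ℕ => ((k.factorial : ℂ)⁻¹) * c r ^ k := by
    intro r
    simpa [smul_eq_mul] using NormedSpace.expSeries_summable' (𝕂 := ℂ) (c r)
  show (∑' k : ℕ, ((k.factorial : ℂ)⁻¹) • (∑ r, c r • F r) ^ k) = _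
  have h2 : (∑' k : ℕ, ((k.factorial : ℂ)⁻¹) • (∑ r, c r • F r) ^ k)
      = ∑' k : ℕ, ∑ r, (((k.factorial : ℂ)⁻¹) * c r ^ k) • F r := tsum_congr h1
  rw [h2, Summable.tsum_finsetSum (fun r _ => (hsummable r).smul_const _)]
  refine Finset.sum_congr rfl fun r _ => ?_
  rw [Summable.tsum_smul_const (hsummable r)]
  congr 1
  have h3 : Complex.exp (c r) = ∑' k : ℕ, ((k.factorial : ℂ)⁻¹) • (c r) ^ k := by
    rw [Complex.exp_eq_exp_ℂ]
    exact congrFun (NormedSpace.exp_eq_tsum (𝕂 := ℂ) (𝔸 := ℂ)) (c r)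
  rw [h3]
  simp [smul_eq_mul]

/-- Cesàro average of a nonzero-frequency oscillation tends to 0. -/
lemma osc_tendsto_zero (ω : ℝ) (hω : ω ≠ 0) :
    Tendsto (fun C : ℝ => ((1/C : ℝ) : ℂ) *
      ∫ t in (0:ℝ)..C, Complex.exp (((ω : ℂ) * Complex.I) * t)) atTop (nhds 0) := by
  have hc : (ω : ℂ) * Complex.I ≠ 0 := by
    simp [Complex.ext_iff, hω]
  have key : ∀ C : ℝ, (∫ t in (0:ℝ)..C, Complex.exp (((ω : ℂ) * Complex.I) * t))
      = (Complex.exp (((ω : ℂ) * Complex.I) * C) - 1) / ((ω : ℂ) * Complex.I) := by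
    intro C
    rw [integral_exp_mul_complex hc]
    simp
  have hbound : ∀ᶠ C : ℝ in atTop,
      ‖((1/C : ℝ) : ℂ) * ∫ t in (0:ℝ)..C, Complex.exp (((ω : ℂ) * Complex.I) * t)‖
        ≤ (2 / ‖(ω : ℂ) * Complex.I‖) * (1/C) := by
    filter_upwards [eventually_ge_atTop (1:ℝ)] with C hC
    rw [key C]
    have hC0 : (0:ℝ) < C := lt_of_lt_of_le one_pos hC
    have h1 : ‖Complex.exp (((ω : ℂ) * Complex.I) * C)‖ = 1 := by
      rw [Complex.norm_exp]
      have : (((ω : ℂ) * Complex.I) * C).re = 0 := by simp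
      rw [this, Real.exp_zero]
    have h2 : ‖Complex.exp (((ω : ℂ) * Complex.I) * C) - 1‖ ≤ 2 := by
      calc ‖Complex.exp (((ω : ℂ) * Complex.I) * C) - 1‖
          ≤ ‖Complex.exp (((ω : ℂ) * Complex.I) * C)‖ + ‖(1:ℂ)‖ := norm_sub_le _ _
        _ = 2 := by rw [h1]; norm_num
    have h3 : ‖((1/C : ℝ) : ℂ)‖ = 1/C := by
      rw [Complex.norm_real, Real.norm_eq_abs, abs_of_pos (by positivity)]
    rw [norm_mul, norm_div, h3, mul_comm]
    have hcpos : 0 < ‖(ω : ℂ) * Complex.I‖ := norm_pos_iff.mpr hc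
    have h4 : ‖Complex.exp (((ω : ℂ) * Complex.I) * C) - 1‖ / ‖(ω : ℂ) * Complex.I‖
        ≤ 2 / ‖(ω : ℂ) * Complex.I‖ := by gcongr
    exact mul_le_mul_of_nonneg_right h4 (by positivity)
  have hlim : Tendsto (fun C : ℝ => (2 / ‖(ω : ℂ) * Complex.I‖) * (1/C)) atTop (nhds 0) := by
    have := tendsto_inv_atTop_zero.const_mul (2 / ‖(ω : ℂ) * Complex.I‖)
    simpa [one_div, mul_zero] using this
  exact squeeze_zero_norm' hbound hlim

end Aux

open Matrix Filter in
/-- The average mixing matrix of a graph equals the sum of the entrywise (Schur)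
squares of the spectral idempotents. -/
theorem average_mixing_eq_sum_schur_squares
    (n m : ℕ) (A : Matrix (Fin n) (Fin n) ℝ)
    (θ : Fin m → ℝ) (E : Fin m → Matrix (Fin n) (Fin n) ℝ)
    (hθ : Function.Injective θ)
    (hsym : ∀ r, (E r)ᵀ = E r)
    (hidem : ∀ r, E r * E r = E r)
    (horth : ∀ r s, r ≠ s → E r * E s = 0)
    (hsum : ∑ r, E r = 1)
    (hA : A = ∑ r, θ r • E r) (u v : Fin n) :
    Tendsto (fun C : ℝ => (1/C) * ∫ t in (0:ℝ)..C,
        (NormedSpace.exp ((t • Complex.I) • A.map Complex.ofReal) u v *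
          NormedSpace.exp (((-t) • Complex.I) • A.map Complex.ofReal) u v))
      atTop (nhds (((∑ r, (E r ⊙ E r)) u v : ℝ) : ℂ)) := by
  classical
  set F : Fin m → Matrix (Fin n) (Fin n) ℂ := fun r => (E r).map Complex.ofReal with hF
  have hFid : ∀ r, F r * F r = F r := by
    intro r
    show ((E r).map Complex.ofReal) * ((E r).map Complex.ofReal) = (E r).map Complex.ofReal
    rw [mapC_mul, hidem r]
  have hFor : ∀ r s, r ≠ s → F r * F s = 0 := by
    intro r s hrs
    show ((E r).map Complex.ofReal) * ((E s).map Complex.ofReal) = 0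
    rw [mapC_mul, horth r s hrs]
    ext i j; simp
  have hFsum : ∑ r, F r = 1 := by
    ext i j
    have h1 : ∑ r, E r i j = (1 : Matrix (Fin n) (Fin n) ℝ) i j := by
      rw [← hsum, Matrix.sum_apply]
    simp only [Matrix.sum_apply, hF, Matrix.map_apply, Matrix.one_apply] at h1 ⊢
    by_cases hij : i = j
    · simp only [hij, if_true] at h1 ⊢
      exact_mod_cast h1
    · simp only [hij, if_false] at h1 ⊢
      exact_mod_cast h1
  -- exp formula
  have hmap : ∀ z : ℂ, z • A.map Complex.ofReal = ∑ r, (z * θ r) • F r := by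
    intro z
    subst hA
    ext i j
    simp only [Matrix.smul_apply, Matrix.map_apply, Matrix.sum_apply, smul_eq_mul, hF]
    push_cast
    rw [Finset.mul_sum]
    exact Finset.sum_congr rfl fun r _ => by ring
  have hexp : ∀ z : ℂ, NormedSpace.exp (z • A.map Complex.ofReal)
      = ∑ r, Complex.exp (z * θ r) • F r := by
    intro z
    rw [hmap z, spec_exp F hFid hFor hFsum]
  have hentry : ∀ z : ℂ, NormedSpace.exp (z • A.map Complex.ofReal) u v
      = ∑ r, Complex.exp (z * θ r) * ((E r u v : ℝ) : ℂ) := by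
    intro z
    rw [hexp z]
    simp [Matrix.sum_apply, Matrix.smul_apply, smul_eq_mul, hF, Matrix.map_apply]
  set e : Fin m → ℂ := fun r => ((E r u v : ℝ) : ℂ) with he
  -- rewrite integrand
  have hind : ∀ t : ℝ,
      (NormedSpace.exp ((t • Complex.I) • A.map Complex.ofReal) u v *
        NormedSpace.exp (((-t) • Complex.I) • A.map Complex.ofReal) u v)
      = ∑ r, ∑ s, (e r * e s) *
          Complex.exp ((((θ r - θ s : ℝ) : ℂ) * Complex.I) * t) := by
    intro t
    rw [hentry, hentry, Finset.sum_mul_sum]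
    refine Finset.sum_congr rfl fun r _ => Finset.sum_congr rfl fun s _ => ?_
    have hexps : Complex.exp ((t • Complex.I) * θ r) *
        Complex.exp (((-t) • Complex.I) * θ s)
        = Complex.exp ((((θ r - θ s : ℝ) : ℂ) * Complex.I) * t) := by
      rw [← Complex.exp_add]
      congr 1
      push_cast [Complex.real_smul]
      ring
    rw [mul_mul_mul_comm, hexps]
    ring
  have hfun : ∀ C : ℝ, ((1/C : ℝ) : ℂ) * (∫ t in (0:ℝ)..C,
      (NormedSpace.exp ((t • Complex.I) • A.map Complex.ofReal) u v *
        NormedSpace.exp (((-t) • Complex.I) • A.map Complex.ofReal) u v))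
      = ∑ r, ∑ s, (e r * e s) * (((1/C : ℝ) : ℂ) *
          ∫ t in (0:ℝ)..C, Complex.exp ((((θ r - θ s : ℝ) : ℂ) * Complex.I) * t)) := by
    intro C
    rw [intervalIntegral.integral_congr (g := fun t => ∑ r, ∑ s, (e r * e s) *
          Complex.exp ((((θ r - θ s : ℝ) : ℂ) * Complex.I) * t))
        (fun t _ => hind t)]
    rw [intervalIntegral.integral_finset_sum]
    · rw [Finset.mul_sum]
      refine Finset.sum_congr rfl fun r _ => ?_
      rw [intervalIntegral.integral_finset_sum]
      · rw [Finset.mul_sum]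
        refine Finset.sum_congr rfl fun s _ => ?_
        rw [intervalIntegral.integral_const_mul]
        ring
      · intro s _
        apply Continuous.intervalIntegrable
        exact continuous_const.mul (Complex.continuous_exp.comp
          (continuous_const.mul Complex.continuous_ofReal))
    · intro r _
      apply Continuous.intervalIntegrable
      exact continuous_finset_sum _ fun s _ => continuous_const.mul
        (Complex.continuous_exp.comp (continuous_const.mul Complex.continuous_ofReal))
  -- termwise limits
  have hterm : ∀ r s : Fin m, Tendsto (fun C : ℝ => (e r * e s) * (((1/C : ℝ) : ℂ) *
      ∫ t in (0:ℝ)..C, Complex.exp ((((θ r - θ s : ℝ) : ℂ) * Complex.I) * t))) atTop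
      (nhds ((e r * e s) * (if r = s then 1 else 0))) := by
    intro r s
    by_cases hrs : r = s
    · subst hrs
      simp only [sub_self, Complex.ofReal_zero, zero_mul, Complex.exp_zero, if_true]
      have heq : (fun _ : ℝ => (e r * e r) * 1) =ᶠ[atTop]
          (fun C : ℝ => (e r * e r) * (((1/C : ℝ) : ℂ) * ∫ t in (0:ℝ)..C, (1:ℂ))) := by
        filter_upwards [eventually_gt_atTop (0:ℝ)] with C hC
        have hC0 : (C : ℂ) ≠ 0 := Complex.ofReal_ne_zero.mpr hC.ne'
        rw [intervalIntegral.integral_const, sub_zero, Complex.real_smul, mul_one]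
        push_cast
        field_simp
      exact tendsto_const_nhds.congr' heq
    · have hω : θ r - θ s ≠ 0 := sub_ne_zero.mpr (fun h => hrs (hθ h))
      have := (osc_tendsto_zero (θ r - θ s) hω).const_mul (e r * e s)
      simpa [hrs, mul_zero] using this
  have hlim := tendsto_finset_sum Finset.univ (fun r (_ : r ∈ Finset.univ) =>
    tendsto_finset_sum Finset.univ (fun s (_ : s ∈ Finset.univ) => hterm r s))
  have hval : (∑ r, ∑ s, (e r * e s) * (if r = s then 1 else 0))
      = (((∑ r, (E r ⊙ E r)) u v : ℝ) : ℂ) := by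
    have h5 : ((∑ r, (E r ⊙ E r)) u v : ℝ) = ∑ r, (E r u v) * (E r u v) := by
      simp [Matrix.sum_apply, Matrix.hadamard]
    rw [h5]
    push_cast
    refine Finset.sum_congr rfl fun r _ => ?_
    rw [Finset.sum_eq_single r]
    · simp [he]
    · intro s _ hsr; simp [Ne.symm hsr]
    · intro h; exact absurd (Finset.mem_univ r) h
  rw [← hval]
  refine Tendsto.congr (fun C => ?_) hlim
  rw [← hfun C]
  norm_num
end

section
/- If the graph X is connected, then all entries of the average mixing matrix M̂ = Σ_r E_r ∘ E_r are strictly positive. -/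
open Matrix in
/-- If the graph `X` is connected, then all entries of the average mixing matrix
`M̂ = ∑ r, E r ⊙ E r` are strictly positive. -/
theorem average_mixing_entries_pos_of_connected
    (n m : ℕ) (G : SimpleGraph (Fin n)) [DecidableRel G.Adj]
    (hconn : G.Connected)
    (θ : Fin m → ℝ) (E : Fin m → Matrix (Fin n) (Fin n) ℝ)
    (hθ : Function.Injective θ)
    (hsym : ∀ r, (E r)ᵀ = E r)
    (hidem : ∀ r, E r * E r = E r)
    (horth : ∀ r s, r ≠ s → E r * E s = 0)
    (hsum : ∑ r, E r = 1)
    (hA : G.adjMatrix ℝ = ∑ r, θ r • E r) :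
    ∀ u v : Fin n, 0 < (∑ r, (E r ⊙ E r)) u v := by
  have hpow : ∀ k : ℕ, G.adjMatrix ℝ ^ k = ∑ r, θ r ^ k • E r := by
    intro k
    induction k with
    | zero => simp [hsum]
    | succ k ih =>
      rw [pow_succ, ih, hA, Finset.sum_mul_sum]
      refine Finset.sum_congr rfl fun r _ => ?_
      rw [Finset.sum_eq_single r]
      · rw [Matrix.smul_mul, Matrix.mul_smul, smul_smul, hidem r, ← pow_succ]
      · intro s _ hs
        rw [Matrix.smul_mul, Matrix.mul_smul, horth r s hs.symm, smul_zero, smul_zero]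
      · intro h; exact absurd (Finset.mem_univ r) h
  intro u v
  obtain ⟨p⟩ := hconn.preconnected u v
  have hk : (G.adjMatrix ℝ ^ p.length) u v ≠ 0 := by
    rw [SimpleGraph.adjMatrix_pow_apply_eq_card_walk]
    have : 0 < Fintype.card { q : G.Walk u v | q.length = p.length } :=
      Fintype.card_pos_iff.mpr ⟨⟨p, rfl⟩⟩
    positivity
  rw [hpow p.length] at hk
  have hex : ∃ r, E r u v ≠ 0 := by
    by_contra h
    push_neg at h
    apply hk
    simp only [Matrix.sum_apply, Matrix.smul_apply]
    exact Finset.sum_eq_zero fun r _ => by rw [h r, smul_zero]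
  obtain ⟨r, hr⟩ := hex
  simp only [Matrix.sum_apply, Matrix.hadamard_apply]
  exact Finset.sum_pos' (fun s _ => mul_self_nonneg _)
    ⟨r, Finset.mem_univ r, mul_self_pos.mpr hr⟩
end

section
/- The average mixing matrix of a graph has rational entries. -/
open Matrix Polynomial

namespace AvgMixAux

/-- A real matrix with all entries rational. -/
def RatM {a b : Type*} (M : Matrix a b ℝ) : Prop := ∀ i j, ∃ q : ℚ, M i j = (q : ℝ)

lemma ratM_exists {a b : Type*} {M : Matrix a b ℝ} (h : RatM M) :
    ∃ M₀ : Matrix a b ℚ, M₀.map ((↑) : ℚ → ℝ) = M := by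
  refine ⟨fun i j => (h i j).choose, ?_⟩
  ext i j
  exact ((h i j).choose_spec).symm

lemma ratM_pow {a : Type*} [Fintype a] [DecidableEq a] {M : Matrix a a ℝ} (h : RatM M) (k : ℕ) :
    RatM (M ^ k) := by
  obtain ⟨M₀, rfl⟩ := ratM_exists h
  have hmap : (M₀.map ((↑) : ℚ → ℝ)) ^ k = (M₀ ^ k).map ((↑) : ℚ → ℝ) := by
    have := map_pow ((Rat.castHom ℝ).mapMatrix) M₀ k
    simpa [RingHom.mapMatrix_apply] using this.symm
  rw [hmap]
  intro i j
  exact ⟨(M₀ ^ k) i j, rfl⟩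

lemma ratM_trace {a : Type*} [Fintype a] {M : Matrix a a ℝ} (h : RatM M) :
    ∃ q : ℚ, M.trace = (q : ℝ) := by
  obtain ⟨M₀, rfl⟩ := ratM_exists h
  refine ⟨M₀.trace, ?_⟩
  simp [Matrix.trace, Matrix.diag, Matrix.map_apply]

lemma rat_solve {ι : Type*} [Fintype ι] [DecidableEq ι] {H : Matrix ι ι ℝ} {b c : ι → ℝ}
    (hH : RatM H) (hb : ∀ i, ∃ q : ℚ, b i = (q : ℝ)) (hdet : H.det ≠ 0)
    (hc : H *ᵥ c = b) : ∀ i, ∃ q : ℚ, c i = (q : ℝ) := by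
  obtain ⟨H₀, rfl⟩ := ratM_exists hH
  choose b₀ hb₀ using hb
  have hdetmap : (H₀.map ((↑) : ℚ → ℝ)).det = ((H₀.det : ℚ) : ℝ) := by
    have := RingHom.map_det (Rat.castHom ℝ) H₀
    simpa [RingHom.mapMatrix_apply] using this.symm
  have hdet₀ : H₀.det ≠ 0 := by
    intro h0
    apply hdet
    rw [hdetmap, h0]
    simp
  have hu₀ : IsUnit H₀.det := isUnit_iff_ne_zero.mpr hdet₀
  have hu : IsUnit (H₀.map ((↑) : ℚ → ℝ)).det := isUnit_iff_ne_zero.mpr hdet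
  set c₀ : ι → ℚ := H₀⁻¹ *ᵥ b₀ with hc₀
  have h1 : H₀ *ᵥ c₀ = b₀ := by
    rw [hc₀, Matrix.mulVec_mulVec, Matrix.mul_nonsing_inv _ hu₀, Matrix.one_mulVec]
  have h2 : (H₀.map ((↑) : ℚ → ℝ)) *ᵥ (fun i => ((c₀ i : ℚ) : ℝ)) = b := by
    funext i
    have := congrFun h1 i
    simp only [Matrix.mulVec, dotProduct] at this ⊢
    rw [hb₀ i, ← this]
    push_cast
    rfl
  have e1 : c = (H₀.map ((↑) : ℚ → ℝ))⁻¹ *ᵥ b := by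
    rw [← hc, Matrix.mulVec_mulVec, Matrix.nonsing_inv_mul _ hu, Matrix.one_mulVec]
  have e2 : (fun i => ((c₀ i : ℚ) : ℝ)) = (H₀.map ((↑) : ℚ → ℝ))⁻¹ *ᵥ b := by
    rw [← h2, Matrix.mulVec_mulVec, Matrix.nonsing_inv_mul _ hu, Matrix.one_mulVec]
  intro i
  exact ⟨c₀ i, by rw [e1, ← e2]⟩

lemma trace_pos {n : ℕ} {E : Matrix (Fin n) (Fin n) ℝ} (hsym : Eᵀ = E) (hidem : E * E = E)
    (hne : E ≠ 0) : 0 < E.trace := by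
  have hs : ∀ i j, E j i = E i j := by
    intro i j
    exact congrFun (congrFun hsym i) j
  have hdiag : E.trace = ∑ i, ∑ j, E i j ^ 2 := by
    conv_lhs => rw [← hidem]
    rw [Matrix.trace]
    refine Finset.sum_congr rfl fun i _ => ?_
    rw [Matrix.diag, Matrix.mul_apply]
    exact Finset.sum_congr rfl fun j _ => by rw [hs i j, sq]
  obtain ⟨i, j, hij⟩ : ∃ i j, E i j ≠ 0 := by
    by_contra h
    push_neg at h
    exact hne (by ext i j; simpa using h i j)
  rw [hdiag]
  refine Finset.sum_pos' (fun i _ => Finset.sum_nonneg fun j _ => sq_nonneg _) ?_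
  refine ⟨i, Finset.mem_univ i, Finset.sum_pos' (fun j _ => sq_nonneg _) ?_⟩
  exact ⟨j, Finset.mem_univ j, by positivity⟩

lemma mulVec_dot {ι : Type*} [Fintype ι] (M : Matrix ι ι ℝ) (a b : ι → ℝ) :
    (M *ᵥ a) ⬝ᵥ b = a ⬝ᵥ (Mᵀ *ᵥ b) := by
  simp only [dotProduct, Matrix.mulVec, Matrix.transpose_apply, Finset.sum_mul,
    Finset.mul_sum]
  rw [Finset.sum_comm]
  exact Finset.sum_congr rfl fun i _ => Finset.sum_congr rfl fun j _ => by ring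

end AvgMixAux

open AvgMixAux

open Matrix in
/-- The average mixing matrix of a graph has rational entries. -/
theorem average_mixing_rational
    (n m : ℕ) (G : SimpleGraph (Fin n)) [DecidableRel G.Adj]
    (θ : Fin m → ℝ) (E : Fin m → Matrix (Fin n) (Fin n) ℝ)
    (hθ : Function.Injective θ)
    (hsym : ∀ r, (E r)ᵀ = E r)
    (hidem : ∀ r, E r * E r = E r)
    (horth : ∀ r s, r ≠ s → E r * E s = 0)
    (hsum : ∑ r, E r = 1)
    (hA : G.adjMatrix ℝ = ∑ r, θ r • E r) :
    ∀ u v : Fin n, ∃ q : ℚ, (∑ r, (E r ⊙ E r)) u v = q := by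
  classical
  intro u v
  set A : Matrix (Fin n) (Fin n) ℝ := G.adjMatrix ℝ with hAdef
  -- spectral decomposition of powers
  have hpow : ∀ k : ℕ, A ^ k = ∑ r, θ r ^ k • E r := by
    intro k
    induction k with
    | zero => simp [hsum]
    | succ k ih =>
      rw [pow_succ, ih, hA, Finset.sum_mul_sum]
      refine Finset.sum_congr rfl fun r _ => ?_
      rw [Finset.sum_eq_single r]
      · rw [Matrix.smul_mul, Matrix.mul_smul, smul_smul, hidem r, ← pow_succ]
      · intro s _ hsr
        rw [Matrix.smul_mul, Matrix.mul_smul, horth r s (Ne.symm hsr)]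
        · simp
      · intro h; exact absurd (Finset.mem_univ r) h
  have hesum : ∀ k : ℕ, ∀ a b : Fin n, (A ^ k) a b = ∑ r, θ r ^ k * E r a b := by
    intro k a b
    rw [hpow k]
    simp [Matrix.sum_apply, smul_eq_mul]
  have htr : ∀ k : ℕ, (A ^ k).trace = ∑ r, θ r ^ k * (E r).trace := by
    intro k
    rw [hpow k, Matrix.trace_sum]
    exact Finset.sum_congr rfl fun r _ => by rw [Matrix.trace_smul, smul_eq_mul]
  -- the support of the decomposition
  set S : Finset (Fin m) := Finset.univ.filter (fun r => E r ≠ 0) with hS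
  set N : ℕ := S.card with hNdef
  set σ : Fin N ≃ {x // x ∈ S} := S.equivFin.symm with hσ
  set w : Fin N → ℝ := fun j => θ (σ j : Fin m) with hw
  set μf : Fin N → ℝ := fun j => (E (σ j : Fin m)).trace with hμ
  set ef : Fin N → ℝ := fun j => E (σ j : Fin m) u v with hef
  have hreindex : ∀ F : Fin m → ℝ, (∀ r, E r = 0 → F r = 0) →
      ∑ j : Fin N, F (σ j : Fin m) = ∑ r : Fin m, F r := by
    intro F hF
    have h1 : ∑ j : Fin N, F (σ j : Fin m) = ∑ r : {x // x ∈ S}, F (r : Fin m) :=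
      Equiv.sum_comp σ (fun r : {x // x ∈ S} => F (r : Fin m))
    rw [h1, Finset.sum_coe_sort S (fun r => F r)]
    refine Finset.sum_subset (Finset.subset_univ S) fun x _ hx => ?_
    apply hF
    by_contra hne
    exact hx (by simp [hS, hne])
  have hwinj : Function.Injective w := by
    intro a b hab
    exact σ.injective (Subtype.coe_injective (hθ hab))
  have hμpos : ∀ j, 0 < μf j := by
    intro j
    have hmem : (σ j : Fin m) ∈ Finset.univ.filter (fun r => E r ≠ 0) := (σ j).2
    exact AvgMixAux.trace_pos (hsym _) (hidem _) (Finset.mem_filter.mp hmem).2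
  -- Vandermonde matrix
  set V : Matrix (Fin N) (Fin N) ℝ := fun k j => w j ^ (k : ℕ) with hV
  have hdetV : V.det ≠ 0 := by
    have hVt : V = (Matrix.vandermonde w)ᵀ := by
      ext k j
      simp [hV, Matrix.vandermonde_apply]
    rw [hVt, Matrix.det_transpose]
    exact Matrix.det_vandermonde_ne_zero_iff.mpr hwinj
  have hVu : IsUnit V.det := isUnit_iff_ne_zero.mpr hdetV
  have hVtu : IsUnit (Vᵀ).det := by rwa [Matrix.det_transpose]
  -- A is a rational matrix
  have hAq : RatM A := by
    intro a b
    refine ⟨if G.Adj a b then 1 else 0, ?_⟩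
    rw [hAdef]
    by_cases h : G.Adj a b <;> simp [h]
  -- the polynomial with the active eigenvalues as roots
  set ν : Polynomial ℝ := ∏ r ∈ S, (Polynomial.X - Polynomial.C (θ r)) with hν
  have hmonic : ν.Monic :=
    Polynomial.monic_prod_of_monic _ _ fun r _ => Polynomial.monic_X_sub_C _
  have hdeg : ν.natDegree = N := by
    rw [hν, Polynomial.natDegree_prod _ _ (fun r _ => Polynomial.X_sub_C_ne_zero _)]
    simp [hNdef]
  set c : Fin N → ℝ := fun j => ν.coeff j with hcdef
  have hroot : ∀ j : Fin N, w j ^ N + ∑ i : Fin N, c i * w j ^ (i : ℕ) = 0 := by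
    intro j
    have hev : ν.eval (w j) = 0 := by
      rw [hν, Polynomial.eval_prod]
      refine Finset.prod_eq_zero (σ j).2 ?_
      simp [hw]
    rw [Polynomial.eval_eq_sum_range, hdeg, Finset.sum_range_succ] at hev
    have hcoefN : ν.coeff N = 1 := hdeg ▸ hmonic.coeff_natDegree
    rw [hcoefN, one_mul] at hev
    have hfin : ∑ i ∈ Finset.range N, ν.coeff i * w j ^ i
        = ∑ i : Fin N, c i * w j ^ (i : ℕ) := (Fin.sum_univ_eq_sum_range _ _).symm
    rw [hfin] at hev
    linarith
  -- weighted Hankel matrix of traces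
  set Hm : Matrix (Fin N) (Fin N) ℝ := fun k l => (A ^ ((k : ℕ) + (l : ℕ))).trace with hHm
  have htrw : ∀ k : ℕ, (A ^ k).trace = ∑ j : Fin N, w j ^ k * μf j := by
    intro k
    rw [htr k, ← hreindex (fun r => θ r ^ k * (E r).trace) (fun r hr => by simp [hr])]
  have hHfact : Hm = V * Matrix.diagonal μf * Vᵀ := by
    ext k l
    show (A ^ ((k : ℕ) + (l : ℕ))).trace = _
    rw [htrw, Matrix.mul_apply]
    refine Finset.sum_congr rfl fun j _ => ?_
    rw [Matrix.mul_diagonal, Matrix.transpose_apply]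
    show w j ^ ((k : ℕ) + (l : ℕ)) * μf j = V k j * μf j * V l j
    rw [hV]
    show w j ^ ((k : ℕ) + (l : ℕ)) * μf j = w j ^ (k : ℕ) * μf j * w j ^ (l : ℕ)
    rw [pow_add]; ring
  have hdetH : Hm.det ≠ 0 := by
    rw [hHfact, Matrix.det_mul, Matrix.det_mul, Matrix.det_transpose, Matrix.det_diagonal]
    exact mul_ne_zero (mul_ne_zero hdetV
      (Finset.prod_ne_zero_iff.mpr fun j _ => (hμpos j).ne')) hdetV
  have hHq : RatM Hm := fun k l => ratM_trace (ratM_pow hAq _)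
  have hbq : ∀ k : Fin N, ∃ q : ℚ, (fun k : Fin N => -(A ^ ((k : ℕ) + N)).trace) k = (q : ℝ) := by
    intro k
    obtain ⟨q, hq⟩ := ratM_trace (ratM_pow hAq ((k : ℕ) + N))
    refine ⟨-q, ?_⟩
    show -(A ^ ((k : ℕ) + N)).trace = ((-q : ℚ) : ℝ)
    rw [hq]; push_cast; ring
  have hHc : Hm *ᵥ c = fun k : Fin N => -(A ^ ((k : ℕ) + N)).trace := by
    funext k
    show ∑ j, Hm k j * c j = _
    have step1 : ∀ j : Fin N, Hm k j * c j
        = ∑ i : Fin N, (w i ^ (k : ℕ) * μf i) * (c j * w i ^ (j : ℕ)) := by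
      intro j
      show (A ^ ((k : ℕ) + (j : ℕ))).trace * c j = _
      rw [htrw, Finset.sum_mul]
      exact Finset.sum_congr rfl fun i _ => by rw [pow_add]; ring
    calc ∑ j, Hm k j * c j
        = ∑ j : Fin N, ∑ i : Fin N, (w i ^ (k : ℕ) * μf i) * (c j * w i ^ (j : ℕ)) :=
          Finset.sum_congr rfl fun j _ => step1 j
      _ = ∑ i : Fin N, (w i ^ (k : ℕ) * μf i) * (∑ j : Fin N, c j * w i ^ (j : ℕ)) := by
          rw [Finset.sum_comm]
          exact Finset.sum_congr rfl fun i _ => by rw [Finset.mul_sum]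
      _ = ∑ i : Fin N, (w i ^ (k : ℕ) * μf i) * (-(w i ^ N)) := by
          refine Finset.sum_congr rfl fun i _ => ?_
          have := hroot i
          have h2 : ∑ j : Fin N, c j * w i ^ (j : ℕ) = -(w i ^ N) := by linarith
          rw [h2]
      _ = -(A ^ ((k : ℕ) + N)).trace := by
          rw [htrw ((k : ℕ) + N), ← Finset.sum_neg_distrib]
          exact Finset.sum_congr rfl fun i _ => by rw [pow_add]; ring
  have hcq : ∀ j, ∃ q : ℚ, c j = (q : ℝ) := rat_solve hHq hbq hdetH hHc
  choose c₀ hc₀ using hcq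
  -- companion matrix
  set Cm : Matrix (Fin N) (Fin N) ℝ := fun i j =>
    if (i : ℕ) + 1 = N then -c j else if (j : ℕ) = (i : ℕ) + 1 then 1 else 0 with hCm
  have hCq : RatM Cm := by
    intro i j
    refine ⟨if (i : ℕ) + 1 = N then -c₀ j else if (j : ℕ) = (i : ℕ) + 1 then 1 else 0, ?_⟩
    show (if (i : ℕ) + 1 = N then -c j else if (j : ℕ) = (i : ℕ) + 1 then 1 else 0) = _
    split_ifs <;> simp [hc₀ j]
  have hCV : Cm * V = V * Matrix.diagonal w := by
    ext i r
    rw [Matrix.mul_apply, Matrix.mul_diagonal]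
    show (∑ j, Cm i j * w r ^ (j : ℕ)) = w r ^ (i : ℕ) * w r
    by_cases hi : (i : ℕ) + 1 = N
    · have h1 : ∀ j : Fin N, Cm i j * w r ^ (j : ℕ) = -(c j * w r ^ (j : ℕ)) := by
        intro j
        show (if (i : ℕ) + 1 = N then -c j else if (j : ℕ) = (i : ℕ) + 1 then 1 else 0)
            * w r ^ (j : ℕ) = _
        rw [if_pos hi]; ring
      rw [Finset.sum_congr rfl fun j _ => h1 j, Finset.sum_neg_distrib]
      have h2 : ∑ j : Fin N, c j * w r ^ (j : ℕ) = -(w r ^ N) := by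
        have := hroot r; linarith
      rw [h2, neg_neg, ← pow_succ]
      exact (congrArg (fun t => w r ^ t) hi).symm
    · have hlt : (i : ℕ) + 1 < N := lt_of_le_of_ne (Nat.succ_le_of_lt i.2) hi
      have h1 : ∀ j : Fin N, Cm i j * w r ^ (j : ℕ)
          = (if j = (⟨(i : ℕ) + 1, hlt⟩ : Fin N) then w r ^ ((i : ℕ) + 1) else 0) := by
        intro j
        show (if (i : ℕ) + 1 = N then -c j else if (j : ℕ) = (i : ℕ) + 1 then 1 else 0)
            * w r ^ (j : ℕ) = _
        rw [if_neg hi]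
        by_cases hj : (j : ℕ) = (i : ℕ) + 1
        · rw [if_pos hj, if_pos (Fin.ext hj), one_mul, hj]
        · rw [if_neg hj, if_neg (fun h => hj (congrArg Fin.val h)), zero_mul]
      rw [Finset.sum_congr rfl fun j _ => h1 j,
        Finset.sum_ite_eq' Finset.univ (⟨(i : ℕ) + 1, hlt⟩ : Fin N)
          (fun _ => w r ^ ((i : ℕ) + 1))]
      simp [pow_succ]
  have hCpow : ∀ k : ℕ, Cm ^ k * V = V * (Matrix.diagonal w) ^ k := by
    intro k
    induction k with
    | zero => simp
    | succ k ih =>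
      rw [pow_succ, pow_succ, Matrix.mul_assoc, hCV, ← Matrix.mul_assoc, ih, Matrix.mul_assoc]
  have hsq : ∀ k : ℕ, ∃ q : ℚ, (∑ j : Fin N, w j ^ k) = (q : ℝ) := by
    intro k
    have h1 : Cm ^ k = V * (Matrix.diagonal w) ^ k * V⁻¹ := by
      rw [← hCpow k, Matrix.mul_assoc, Matrix.mul_nonsing_inv _ hVu, Matrix.mul_one]
    have h2 : (Cm ^ k).trace = ∑ j : Fin N, w j ^ k := by
      rw [h1, Matrix.mul_assoc, Matrix.trace_mul_comm, Matrix.mul_assoc,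
        Matrix.nonsing_inv_mul _ hVu, Matrix.mul_one, Matrix.diagonal_pow,
        Matrix.trace_diagonal]
      simp [Pi.pow_apply]
    obtain ⟨q, hq⟩ := ratM_trace (ratM_pow hCq k)
    exact ⟨q, by rw [← h2, hq]⟩
  -- Gram matrix
  set Gm : Matrix (Fin N) (Fin N) ℝ := fun k l => ∑ j : Fin N, w j ^ ((k : ℕ) + (l : ℕ))
    with hGm
  have hGfact : Gm = V * Vᵀ := by
    ext k l
    show (∑ j : Fin N, w j ^ ((k : ℕ) + (l : ℕ))) = _
    rw [Matrix.mul_apply]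
    refine Finset.sum_congr rfl fun j _ => ?_
    rw [Matrix.transpose_apply]
    show w j ^ ((k : ℕ) + (l : ℕ)) = w j ^ (k : ℕ) * w j ^ (l : ℕ)
    rw [pow_add]
  have hdetG : Gm.det ≠ 0 := by
    rw [hGfact, Matrix.det_mul, Matrix.det_transpose]
    exact mul_ne_zero hdetV hdetV
  have hGu : IsUnit Gm.det := isUnit_iff_ne_zero.mpr hdetG
  have hGq : RatM Gm := fun k l => hsq _
  set pv : Fin N → ℝ := fun k => (A ^ (k : ℕ)) u v with hpvdef
  have hpvq : ∀ k : Fin N, ∃ q : ℚ, pv k = (q : ℝ) := fun k => (ratM_pow hAq (k : ℕ)) u v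
  have hpe : ∀ k : ℕ, (A ^ k) u v = ∑ j : Fin N, w j ^ k * ef j := by
    intro k
    rw [hesum k u v, ← hreindex (fun r => θ r ^ k * E r u v) (fun r hr => by simp [hr])]
  have hpV : pv = V *ᵥ ef := by
    funext k
    show (A ^ (k : ℕ)) u v = ∑ j, V k j * ef j
    rw [hpe]
  set y : Fin N → ℝ := Gm⁻¹ *ᵥ pv with hy
  have hGy : Gm *ᵥ y = pv := by
    rw [hy, Matrix.mulVec_mulVec, Matrix.mul_nonsing_inv _ hGu, Matrix.one_mulVec]
  have hyq : ∀ i, ∃ q : ℚ, y i = (q : ℝ) := rat_solve hGq hpvq hdetG hGy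
  -- the value is the dot product of two rational vectors
  have hxval : (∑ r, (E r ⊙ E r)) u v = pv ⬝ᵥ y := by
    have h1 : y = Vᵀ⁻¹ *ᵥ ef := by
      rw [hy, hGfact, Matrix.mul_inv_rev, hpV, Matrix.mulVec_mulVec, Matrix.mul_assoc,
        Matrix.nonsing_inv_mul _ hVu, Matrix.mul_one]
    have h2 : pv ⬝ᵥ y = ef ⬝ᵥ ef := by
      rw [h1, hpV, mulVec_dot, Matrix.mulVec_mulVec, Matrix.mul_nonsing_inv _ hVtu,
        Matrix.one_mulVec]
    rw [h2]
    have h3 : (∑ r, (E r ⊙ E r)) u v = ∑ r, E r u v * E r u v := by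
      rw [Matrix.sum_apply]
      exact Finset.sum_congr rfl fun r _ => rfl
    rw [h3, ← hreindex (fun r => E r u v * E r u v) (fun r hr => by simp [hr])]
    rfl
  choose pq hpq using hpvq
  choose yq hyq' using hyq
  refine ⟨∑ k : Fin N, pq k * yq k, ?_⟩
  rw [hxval]
  show ∑ k, pv k * y k = _
  push_cast
  exact Finset.sum_congr rfl fun k _ => by rw [hpq k, hyq' k]
end

section
/- The average mixing matrix of the path P_n equals (1/(2n+2))·(2J + I + T), where T is the permutation matrix swapping vertex j with vertex n+1-j for each j. -/
open Real

private lemma amp_cos_sum (N : ℕ) (hN : 0 < N) (m : ℤ) :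
    ∑ r ∈ Finset.range N, Real.cos (2 * π * m * r / N) = if (N:ℤ) ∣ m then (N:ℝ) else 0 := by
  by_cases hdvd : (N:ℤ) ∣ m
  · obtain ⟨c, hc⟩ := hdvd
    rw [if_pos ⟨c, hc⟩]
    have h1 : ∀ r : ℕ, Real.cos (2 * π * m * r / N) = 1 := by
      intro r
      have : (2 * π * m * r / N : ℝ) = (c * r : ℤ) * (2 * π) := by
        have hN' : (N:ℝ) ≠ 0 := by positivity
        field_simp
        push_cast [hc]
        ring
      rw [this, Real.cos_int_mul_two_pi]
    simp [h1]
  · rw [if_neg hdvd]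
    have hN' : (N:ℂ) ≠ 0 := by exact_mod_cast Nat.cast_ne_zero.mpr hN.ne'
    set z : ℂ := Complex.exp (2 * π * Complex.I * m / N) with hz
    have hzr : ∀ r : ℕ, z ^ r = Complex.exp (((2 * π * m * r / N : ℝ) : ℂ) * Complex.I) := by
      intro r
      rw [hz, ← Complex.exp_nat_mul]
      congr 1
      push_cast
      ring
    have hz1 : z ≠ 1 := by
      intro h
      rw [hz, Complex.exp_eq_one_iff] at h
      obtain ⟨k, hk⟩ := h
      apply hdvd
      refine ⟨k, ?_⟩
      have hpi : (π : ℂ) ≠ 0 := by exact_mod_cast Real.pi_ne_zero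
      have hmk : (m : ℂ) = N * k := by
        field_simp at hk
        have h2 : (2 * (π:ℂ) * Complex.I) ≠ 0 := by simp [Complex.I_ne_zero, hpi]
        exact mul_left_cancel₀ h2 (by linear_combination (2 * (π:ℂ) * Complex.I) * hk)
      exact_mod_cast hmk
    have hzN : z ^ N = 1 := by
      rw [hz, ← Complex.exp_nat_mul]
      have : (N : ℂ) * (2 * π * Complex.I * m / N) = m * (2 * π * Complex.I) := by
        field_simp
      rw [this, Complex.exp_int_mul_two_pi_mul_I]
    have hsum : ∑ r ∈ Finset.range N, z ^ r = 0 := by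
      rw [geom_sum_eq hz1, hzN]; simp
    have hre : ∑ r ∈ Finset.range N, Real.cos (2 * π * m * r / N) =
        (∑ r ∈ Finset.range N, z ^ r).re := by
      rw [Complex.re_sum]
      refine Finset.sum_congr rfl fun r _ => ?_
      rw [hzr r, Complex.exp_ofReal_mul_I_re]
    rw [hre, hsum, Complex.zero_re]

private lemma amp_cos_sum' (n : ℕ) (m : ℤ) :
    ∑ r ∈ Finset.range n, Real.cos (2 * π * (m:ℝ) * ((r:ℝ)+1) / ((n:ℝ)+1)) =
      (if ((n:ℤ)+1) ∣ m then ((n:ℝ)+1) else 0) - 1 := by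
  have h := amp_cos_sum (n+1) (Nat.succ_pos n) m
  rw [Finset.sum_range_succ'] at h
  push_cast at h ⊢
  have h0 : Real.cos (2 * π * (m:ℝ) * (0:ℕ) / ((n:ℝ)+1)) = 1 := by simp
  rw [show ((2:ℝ) * π * (m:ℝ) * (0:ℝ) / ((n:ℝ)+1)) = 0 by ring] at h
  simp only [Real.cos_zero] at h
  have : ∑ r ∈ Finset.range n, Real.cos (2 * π * (m:ℝ) * ((r:ℝ)+1) / ((n:ℝ)+1)) =
      ∑ x ∈ Finset.range n, Real.cos (2 * π * (m:ℝ) * ((x:ℝ)+1) / ((n:ℝ)+1)) := rfl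
  split_ifs with hd
  · rw [if_pos hd] at h; linarith [h]
  · rw [if_neg hd] at h; linarith [h]

private lemma amp_trig (c A B : ℝ) :
    (c * sin A * sin B) * (c * sin A * sin B) =
      c^2/4 - (c^2/4) * cos (2*A) - (c^2/4) * cos (2*B)
      + (c^2/8) * cos (2*A+2*B) + (c^2/8) * cos (2*A-2*B) := by
  simp only [Real.cos_add, Real.cos_sub, Real.cos_two_mul, Real.sin_two_mul]
  linear_combination (c^2*(1 - cos B^2)) * (Real.sin_sq_add_cos_sq A) +
    (c^2 * sin A^2) * (Real.sin_sq_add_cos_sq B)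

private lemma amp_entry_sum (n : ℕ) (j k : ℕ) (hj : j < n) (hk : k < n) :
    ∑ r ∈ Finset.range n,
      ((2/((n:ℝ)+1)) * sin (((j:ℝ)+1)*((r:ℝ)+1)*π/((n:ℝ)+1)) *
        sin (((k:ℝ)+1)*((r:ℝ)+1)*π/((n:ℝ)+1))) *
      ((2/((n:ℝ)+1)) * sin (((j:ℝ)+1)*((r:ℝ)+1)*π/((n:ℝ)+1)) *
        sin (((k:ℝ)+1)*((r:ℝ)+1)*π/((n:ℝ)+1)))
    = (1/(2*(n:ℝ)+2)) * (2 + (if j = k then 1 else 0) + (if j+1+(k+1) = n+1 then 1 else 0)) := by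
  have hN : ((n:ℝ)+1) ≠ 0 := by positivity
  have step : ∀ r : ℕ,
      ((2/((n:ℝ)+1)) * sin (((j:ℝ)+1)*((r:ℝ)+1)*π/((n:ℝ)+1)) *
        sin (((k:ℝ)+1)*((r:ℝ)+1)*π/((n:ℝ)+1))) *
      ((2/((n:ℝ)+1)) * sin (((j:ℝ)+1)*((r:ℝ)+1)*π/((n:ℝ)+1)) *
        sin (((k:ℝ)+1)*((r:ℝ)+1)*π/((n:ℝ)+1)))
      = (2/((n:ℝ)+1))^2/4
        - ((2/((n:ℝ)+1))^2/4) * cos (2 * π * (((j:ℤ)+1 : ℤ):ℝ) * ((r:ℝ)+1) / ((n:ℝ)+1))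
        - ((2/((n:ℝ)+1))^2/4) * cos (2 * π * (((k:ℤ)+1 : ℤ):ℝ) * ((r:ℝ)+1) / ((n:ℝ)+1))
        + ((2/((n:ℝ)+1))^2/8) * cos (2 * π * (((j:ℤ)+(k:ℤ)+2 : ℤ):ℝ) * ((r:ℝ)+1) / ((n:ℝ)+1))
        + ((2/((n:ℝ)+1))^2/8) * cos (2 * π * (((j:ℤ)-(k:ℤ) : ℤ):ℝ) * ((r:ℝ)+1) / ((n:ℝ)+1)) := by
    intro r
    have h := amp_trig (2/((n:ℝ)+1)) (((j:ℝ)+1)*((r:ℝ)+1)*π/((n:ℝ)+1))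
      (((k:ℝ)+1)*((r:ℝ)+1)*π/((n:ℝ)+1))
    rw [show 2*(((j:ℝ)+1)*((r:ℝ)+1)*π/((n:ℝ)+1)) =
        2 * π * (((j:ℤ)+1 : ℤ):ℝ) * ((r:ℝ)+1) / ((n:ℝ)+1) by push_cast; ring] at h
    rw [show 2*(((k:ℝ)+1)*((r:ℝ)+1)*π/((n:ℝ)+1)) =
        2 * π * (((k:ℤ)+1 : ℤ):ℝ) * ((r:ℝ)+1) / ((n:ℝ)+1) by push_cast; ring] at h
    rw [show 2 * π * (((j:ℤ)+1 : ℤ):ℝ) * ((r:ℝ)+1) / ((n:ℝ)+1) +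
          2 * π * (((k:ℤ)+1 : ℤ):ℝ) * ((r:ℝ)+1) / ((n:ℝ)+1) =
        2 * π * (((j:ℤ)+(k:ℤ)+2 : ℤ):ℝ) * ((r:ℝ)+1) / ((n:ℝ)+1) by push_cast; ring] at h
    rw [show 2 * π * (((j:ℤ)+1 : ℤ):ℝ) * ((r:ℝ)+1) / ((n:ℝ)+1) -
          2 * π * (((k:ℤ)+1 : ℤ):ℝ) * ((r:ℝ)+1) / ((n:ℝ)+1) =
        2 * π * (((j:ℤ)-(k:ℤ) : ℤ):ℝ) * ((r:ℝ)+1) / ((n:ℝ)+1) by push_cast; ring] at h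
    exact h
  rw [Finset.sum_congr rfl (fun r _ => step r)]
  have h1 := amp_cos_sum' n ((j:ℤ)+1)
  have h2 := amp_cos_sum' n ((k:ℤ)+1)
  have h3 := amp_cos_sum' n ((j:ℤ)+(k:ℤ)+2)
  have h4 := amp_cos_sum' n ((j:ℤ)-(k:ℤ))
  rw [if_neg (fun hd => by
      have := Int.le_of_dvd (by omega : (0:ℤ) < (j:ℤ)+1) hd
      omega)] at h1
  rw [if_neg (fun hd => by
      have := Int.le_of_dvd (by omega : (0:ℤ) < (k:ℤ)+1) hd
      omega)] at h2
  have h3' : ((((n:ℤ)+1) ∣ ((j:ℤ)+(k:ℤ)+2)) ↔ (j+1+(k+1) = n+1)) := by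
    constructor
    · rintro ⟨c, hc⟩
      have hc1 : (1:ℤ) ≤ c := by
        by_contra hlt
        push_neg at hlt
        have : ((n:ℤ)+1) * c ≤ 0 :=
          mul_nonpos_of_nonneg_of_nonpos (by omega) (by omega)
        omega
      have hc2 : c ≤ 1 := by
        by_contra hlt
        push_neg at hlt
        have : ((n:ℤ)+1) * 2 ≤ ((n:ℤ)+1) * c :=
          mul_le_mul_of_nonneg_left (by omega) (by omega)
        omega
      have : c = 1 := le_antisymm hc2 hc1
      rw [this, mul_one] at hc
      omega
    · intro h; exact ⟨1, by omega⟩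
  have h4' : ((((n:ℤ)+1) ∣ ((j:ℤ)-(k:ℤ))) ↔ (j = k)) := by
    constructor
    · intro hd
      have := Int.eq_zero_of_abs_lt_dvd hd (by rw [abs_lt]; omega)
      omega
    · intro h; exact ⟨0, by omega⟩
  simp only [Finset.sum_add_distrib, Finset.sum_sub_distrib, ← Finset.mul_sum,
    Finset.sum_const, Finset.card_range, nsmul_eq_mul]
  rw [h1, h2, h3, h4]
  have hN2 : (2*(n:ℝ)+2) ≠ 0 := by positivity
  simp only [h3', h4']
  split_ifs <;> (field_simp; ring)

open Matrix Real in
/-- The average mixing matrix of the path `P_n` equals `(1/(2n+2)) (2J + I + T)`,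
where `T` is the permutation matrix swapping vertex `j` with vertex `n+1-j`.
(Vertices are indexed `0, …, n-1`, standing for `1, …, n`.) -/
theorem average_mixing_path
    (n : ℕ) (hn : 0 < n)
    (E : Fin n → Matrix (Fin n) (Fin n) ℝ)
    (hE : ∀ r j k, E r j k =
      (2 / (n + 1)) * sin (((j.val : ℝ) + 1) * ((r.val : ℝ) + 1) * π / (n + 1)) *
        sin (((k.val : ℝ) + 1) * ((r.val : ℝ) + 1) * π / (n + 1)))
    (J T : Matrix (Fin n) (Fin n) ℝ)
    (hJ : ∀ j k, J j k = 1)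
    (hT : ∀ j k, T j k = if j.val + 1 + (k.val + 1) = n + 1 then 1 else 0) :
    ∑ r, (E r ⊙ E r) = (1 / (2 * (n : ℝ) + 2)) • (2 • J + 1 + T) := by
  ext j k
  have lhs_eq : (∑ r, (E r ⊙ E r)) j k = ∑ r : Fin n, E r j k * E r j k := by
    simp [Matrix.hadamard, Matrix.sum_apply]
  rw [lhs_eq]
  have key := amp_entry_sum n j.val k.val j.isLt k.isLt
  have conv1 : ∑ r : Fin n, E r j k * E r j k =
      ∑ r ∈ Finset.range n,
      ((2/((n:ℝ)+1)) * sin (((j.val:ℝ)+1)*((r:ℝ)+1)*π/((n:ℝ)+1)) *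
        sin (((k.val:ℝ)+1)*((r:ℝ)+1)*π/((n:ℝ)+1))) *
      ((2/((n:ℝ)+1)) * sin (((j.val:ℝ)+1)*((r:ℝ)+1)*π/((n:ℝ)+1)) *
        sin (((k.val:ℝ)+1)*((r:ℝ)+1)*π/((n:ℝ)+1))) := by
    rw [← Fin.sum_univ_eq_sum_range]
    refine Finset.sum_congr rfl fun r _ => ?_
    rw [hE]
  rw [conv1, key]
  have hR : ((1 / (2 * (n:ℝ) + 2)) • (2 • J + 1 + T) : Matrix (Fin n) (Fin n) ℝ) j k
      = (1 / (2 * (n:ℝ) + 2)) * ((2:ℕ) • J j k + (1 : Matrix (Fin n) (Fin n) ℝ) j k + T j k) := by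
    simp only [Matrix.smul_apply, Matrix.add_apply, smul_eq_mul]
  rw [hR, hJ, hT, Matrix.one_apply]
  simp [Fin.val_eq_val]
end

section
/- If E_1,…,E_{n-1} are the spectral idempotents of A(P_{n-1}) with eigenvalues θ_1,…,θ_{n-1}, then the spectral idempotents of the Laplacian L(P_n) = DDᵀ are (1/n)J together with (2-θ_r)^{-1}·D E_r Dᵀ for r = 1,…,n-1; i.e., each (2-θ_r)^{-1} D E_r Dᵀ is an idempotent orthogonal projection onto an eigenspace of L(P_n) with eigenvalue 2-θ_r. -/
open Matrix Finset

lemma sum_ind {m a : ℕ} (ha : a < m) :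
    ∑ i : Fin m, (if i.val = a then (1:ℝ) else 0) = 1 := by
  have h : ∀ i : Fin m, (i.val = a) ↔ (i = ⟨a, ha⟩) := fun i => by
    constructor
    · intro h; exact Fin.ext h
    · intro h; exact h ▸ rfl
  simp only [h]
  simp

lemma sum_ind2 {m a b : ℕ} (ha : a < m) :
    ∑ i : Fin m, (if i.val = a then (1:ℝ) else 0) * (if i.val = b then 1 else 0)
      = if a = b then 1 else 0 := by
  have h : ∀ i : Fin m, (if i.val = a then (1:ℝ) else 0) * (if i.val = b then 1 else 0)
      = if i.val = a ∧ i.val = b then 1 else 0 := fun i => by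
    split_ifs <;> simp_all <;> omega
  simp_rw [h]
  by_cases hab : a = b
  · subst hab
    simp_rw [and_self]
    exact sum_ind ha
  · rw [if_neg hab]
    apply Finset.sum_eq_zero
    intro i _
    rw [if_neg]
    rintro ⟨h1, h2⟩; exact hab (h1 ▸ h2.symm ▸ rfl)

lemma DtD (n : ℕ) (D : Matrix (Fin (n + 1)) (Fin n) ℝ)
    (hD : ∀ i j, D i j =
      if i.val = j.val then 1 else if i.val = j.val + 1 then -1 else 0)
    (A : Matrix (Fin n) (Fin n) ℝ)
    (hA : ∀ j k, A j k = if j.val + 1 = k.val ∨ k.val + 1 = j.val then 1 else 0) :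
    Dᵀ * D = (2:ℝ) • (1 : Matrix (Fin n) (Fin n) ℝ) - A := by
  have hD' : ∀ (i : Fin (n+1)) (j : Fin n), D i j =
      (if i.val = j.val then (1:ℝ) else 0) - (if i.val = j.val + 1 then 1 else 0) := by
    intro i j; rw [hD]; split_ifs <;> simp_all <;> omega
  ext j k
  simp only [mul_apply, transpose_apply, Matrix.sub_apply, Matrix.smul_apply, one_apply, smul_eq_mul]
  simp_rw [hD', sub_mul, mul_sub, Finset.sum_sub_distrib]
  have h1 : (j:ℕ) < n + 1 := j.isLt.trans (Nat.lt_succ_self n)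
  have h2 : (j:ℕ) + 1 < n + 1 := Nat.succ_lt_succ j.isLt
  rw [sum_ind2 h1, sum_ind2 h1, sum_ind2 h2, sum_ind2 h2, hA]
  clear hD hD' hA
  simp only [Fin.ext_iff]
  split_ifs <;> first | ring1 | (exfalso; omega)



open Matrix in
/-- If `E_1, …, E_{n-1}` are the spectral idempotents of `A(P_{n-1})` with eigenvalues
`θ_r < 2`, then the spectral idempotents of the Laplacian `L(P_n) = D Dᵀ` are `(1/n) J`
together with `(2 - θ_r)⁻¹ D E_r Dᵀ`: each is a symmetric idempotent projecting onto an
eigenspace of `L` (with eigenvalues `0` and `2 - θ_r` respectively), and they sum to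
the identity.  (Here stated with paths on `n+1` and `n` vertices.) -/
theorem laplacian_path_idempotents
    (n : ℕ) (D : Matrix (Fin (n + 1)) (Fin n) ℝ)
    (hD : ∀ i j, D i j =
      if i.val = j.val then 1 else if i.val = j.val + 1 then -1 else 0)
    (A : Matrix (Fin n) (Fin n) ℝ)
    (hA : ∀ j k, A j k = if j.val + 1 = k.val ∨ k.val + 1 = j.val then 1 else 0)
    (θ : Fin n → ℝ) (E : Fin n → Matrix (Fin n) (Fin n) ℝ)
    (hθ : Function.Injective θ) (hθ2 : ∀ r, θ r < 2)
    (hsym : ∀ r, (E r)ᵀ = E r)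
    (hidem : ∀ r, E r * E r = E r)
    (horth : ∀ r s, r ≠ s → E r * E s = 0)
    (hsum : ∑ r, E r = 1)
    (hAE : A = ∑ r, θ r • E r)
    (J : Matrix (Fin (n + 1)) (Fin (n + 1)) ℝ) (hJ : ∀ j k, J j k = 1) :
    (∀ r, ((2 - θ r)⁻¹ • (D * E r * Dᵀ)) * ((2 - θ r)⁻¹ • (D * E r * Dᵀ)) =
        (2 - θ r)⁻¹ • (D * E r * Dᵀ)) ∧
    (∀ r, ((2 - θ r)⁻¹ • (D * E r * Dᵀ))ᵀ = (2 - θ r)⁻¹ • (D * E r * Dᵀ)) ∧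
    (∀ r, (D * Dᵀ) * ((2 - θ r)⁻¹ • (D * E r * Dᵀ)) =
        (2 - θ r) • ((2 - θ r)⁻¹ • (D * E r * Dᵀ))) ∧
    (((n : ℝ) + 1)⁻¹ • J) * (((n : ℝ) + 1)⁻¹ • J) = ((n : ℝ) + 1)⁻¹ • J ∧
    (D * Dᵀ) * (((n : ℝ) + 1)⁻¹ • J) = 0 ∧
    ((n : ℝ) + 1)⁻¹ • J + ∑ r, (2 - θ r)⁻¹ • (D * E r * Dᵀ) = 1 := by
  have hne : ∀ r, (2 - θ r) ≠ 0 := fun r => by have := hθ2 r; linarith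
  have hn1 : ((n:ℝ) + 1) ≠ 0 := by positivity
  have hD' : ∀ (i : Fin (n+1)) (j : Fin n), D i j =
      (if i.val = j.val then (1:ℝ) else 0) - (if i.val = j.val + 1 then 1 else 0) := by
    intro i j; rw [hD]; split_ifs <;> simp_all <;> omega
  -- B = DᵀD spectral form
  have hB : Dᵀ * D = ∑ r, (2 - θ r) • E r := by
    rw [DtD n D hD A hA, hAE, ← hsum, Finset.smul_sum, ← Finset.sum_sub_distrib]
    exact Finset.sum_congr rfl (fun r _ => (sub_smul 2 (θ r) (E r)).symm)
  have hBE : ∀ r, (Dᵀ * D) * E r = (2 - θ r) • E r := by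
    intro r
    rw [hB, Finset.sum_mul, Finset.sum_eq_single r]
    · rw [smul_mul_assoc, hidem]
    · intro s _ hs; rw [smul_mul_assoc, horth s r hs, smul_zero]
    · intro h; exact absurd (Finset.mem_univ r) h
  -- key products
  have key : ∀ r, (D * E r * Dᵀ) * (D * E r * Dᵀ) = (2 - θ r) • (D * E r * Dᵀ) := by
    intro r
    calc (D * E r * Dᵀ) * (D * E r * Dᵀ) = D * (E r * ((Dᵀ * D) * E r)) * Dᵀ := by
          simp only [Matrix.mul_assoc]
      _ = D * (E r * ((2 - θ r) • E r)) * Dᵀ := by rw [hBE r]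
      _ = (2 - θ r) • (D * (E r * E r) * Dᵀ) := by
          rw [Matrix.mul_smul, Matrix.mul_smul, Matrix.smul_mul]
      _ = (2 - θ r) • (D * E r * Dᵀ) := by rw [hidem r]
  have key0 : ∀ r s, r ≠ s → (D * E r * Dᵀ) * (D * E s * Dᵀ) = 0 := by
    intro r s hrs
    calc (D * E r * Dᵀ) * (D * E s * Dᵀ) = D * (E r * ((Dᵀ * D) * E s)) * Dᵀ := by
          simp only [Matrix.mul_assoc]
      _ = D * (E r * ((2 - θ s) • E s)) * Dᵀ := by rw [hBE s]
      _ = (2 - θ s) • (D * (E r * E s) * Dᵀ) := by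
          rw [Matrix.mul_smul, Matrix.mul_smul, Matrix.smul_mul]
      _ = 0 := by rw [horth r s hrs, Matrix.mul_zero, Matrix.zero_mul, smul_zero]
  -- parts 1–3
  have p1 : ∀ r, ((2 - θ r)⁻¹ • (D * E r * Dᵀ)) * ((2 - θ r)⁻¹ • (D * E r * Dᵀ)) =
      (2 - θ r)⁻¹ • (D * E r * Dᵀ) := by
    intro r
    rw [Matrix.smul_mul, Matrix.mul_smul, key r, smul_smul, smul_smul, mul_assoc,
      inv_mul_cancel₀ (hne r), mul_one]
  have p2 : ∀ r, ((2 - θ r)⁻¹ • (D * E r * Dᵀ))ᵀ = (2 - θ r)⁻¹ • (D * E r * Dᵀ) := by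
    intro r
    rw [transpose_smul]
    congr 1
    rw [transpose_mul, transpose_mul, transpose_transpose, hsym, ← Matrix.mul_assoc]
  have p3 : ∀ r, (D * Dᵀ) * ((2 - θ r)⁻¹ • (D * E r * Dᵀ)) =
      (2 - θ r) • ((2 - θ r)⁻¹ • (D * E r * Dᵀ)) := by
    intro r
    have h : (D * Dᵀ) * (D * E r * Dᵀ) = (2 - θ r) • (D * E r * Dᵀ) := by
      calc (D * Dᵀ) * (D * E r * Dᵀ) = D * ((Dᵀ * D) * E r) * Dᵀ := by
            simp only [Matrix.mul_assoc]
        _ = D * ((2 - θ r) • E r) * Dᵀ := by rw [hBE r]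
        _ = (2 - θ r) • (D * E r * Dᵀ) := by rw [Matrix.mul_smul, Matrix.smul_mul]
    rw [Matrix.mul_smul, h, smul_smul, smul_smul, inv_mul_cancel₀ (hne r),
      mul_inv_cancel₀ (hne r)]
  -- part 4
  have hJJ : J * J = ((n:ℝ) + 1) • J := by
    ext j k
    simp [Matrix.mul_apply, hJ, Finset.card_univ]
  have p4 : (((n : ℝ) + 1)⁻¹ • J) * (((n : ℝ) + 1)⁻¹ • J) = ((n : ℝ) + 1)⁻¹ • J := by
    rw [Matrix.smul_mul, Matrix.mul_smul, hJJ, smul_smul, smul_smul, mul_assoc,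
      inv_mul_cancel₀ hn1, mul_one]
  -- part 5
  have hDtJ : Dᵀ * J = 0 := by
    ext j k
    simp only [mul_apply, transpose_apply, hJ, mul_one, Matrix.zero_apply]
    simp_rw [hD']
    rw [Finset.sum_sub_distrib, sum_ind (j.isLt.trans (Nat.lt_succ_self n)),
      sum_ind (Nat.succ_lt_succ j.isLt), sub_self]
  have hJD : J * D = 0 := by
    ext k j
    simp only [mul_apply, hJ, one_mul, Matrix.zero_apply]
    simp_rw [hD']
    rw [Finset.sum_sub_distrib, sum_ind (j.isLt.trans (Nat.lt_succ_self n)),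
      sum_ind (Nat.succ_lt_succ j.isLt), sub_self]
  have p5 : (D * Dᵀ) * (((n : ℝ) + 1)⁻¹ • J) = 0 := by
    rw [Matrix.mul_smul, Matrix.mul_assoc, hDtJ, Matrix.mul_zero, smul_zero]
  -- part 6: N = 1 - P - Qs is a symmetric idempotent with trace 0, hence 0
  set P : Matrix (Fin (n+1)) (Fin (n+1)) ℝ := ((n : ℝ) + 1)⁻¹ • J with hPdef
  set Qs : Matrix (Fin (n+1)) (Fin (n+1)) ℝ :=
    ∑ r, (2 - θ r)⁻¹ • (D * E r * Dᵀ) with hQdef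
  have e1 : P * Qs = 0 := by
    rw [hPdef, hQdef, Finset.mul_sum]
    refine Finset.sum_eq_zero fun r _ => ?_
    rw [Matrix.smul_mul, Matrix.mul_smul, ← Matrix.mul_assoc, ← Matrix.mul_assoc, hJD,
      Matrix.zero_mul, Matrix.zero_mul, smul_zero, smul_zero]
  have e2 : Qs * P = 0 := by
    rw [hPdef, hQdef, Finset.sum_mul]
    refine Finset.sum_eq_zero fun r _ => ?_
    rw [Matrix.smul_mul, Matrix.mul_smul, Matrix.mul_assoc, Matrix.mul_assoc, hDtJ,
      Matrix.mul_zero, Matrix.mul_zero, smul_zero, smul_zero]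
  have e3 : Qs * Qs = Qs := by
    rw [hQdef, Finset.sum_mul]
    refine Finset.sum_congr rfl fun r _ => ?_
    rw [Finset.mul_sum, Finset.sum_eq_single r]
    · exact p1 r
    · intro s _ hs
      rw [Matrix.smul_mul, Matrix.mul_smul, key0 r s (Ne.symm hs), smul_zero, smul_zero]
    · intro h; exact absurd (Finset.mem_univ r) h
  set N : Matrix (Fin (n+1)) (Fin (n+1)) ℝ := 1 - P - Qs with hNdef
  have hNN : N * N = N := by
    rw [hNdef]
    simp only [sub_mul, mul_sub, one_mul, mul_one, e1, e2, e3, p4, sub_zero]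
    abel
  have hNt : Nᵀ = N := by
    have hJt : Jᵀ = J := by ext i j; simp [Matrix.transpose_apply, hJ]
    rw [hNdef, transpose_sub, transpose_sub, transpose_one, hPdef, transpose_smul, hJt,
      hQdef, transpose_sum]
    congr 1
    exact Finset.sum_congr rfl fun r _ => p2 r
  have htrJ : Matrix.trace J = (n : ℝ) + 1 := by
    simp [Matrix.trace, Matrix.diag, hJ, Finset.card_univ]
  have htrQ : Matrix.trace Qs = (n : ℝ) := by
    rw [hQdef, Matrix.trace_sum]
    have h1 : ∀ r, Matrix.trace ((2 - θ r)⁻¹ • (D * E r * Dᵀ)) = Matrix.trace (E r) := by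
      intro r
      rw [Matrix.trace_smul, Matrix.trace_mul_cycle, hBE r, Matrix.trace_smul, smul_eq_mul,
        smul_eq_mul, ← mul_assoc, inv_mul_cancel₀ (hne r), one_mul]
    simp_rw [h1]
    rw [← Matrix.trace_sum, hsum, Matrix.trace_one]
    simp
  have htrN : Matrix.trace N = 0 := by
    rw [hNdef, Matrix.trace_sub, Matrix.trace_sub, Matrix.trace_one, hPdef,
      Matrix.trace_smul, htrJ, htrQ]
    simp [Finset.card_univ, smul_eq_mul, inv_mul_cancel₀ hn1]
  have hsq : ∑ i, ∑ j, (N i j) ^ 2 = 0 := by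
    have h0 : Matrix.trace (N * N) = 0 := by rw [hNN, htrN]
    calc ∑ i, ∑ j, (N i j) ^ 2 = ∑ i, ∑ j, N i j * N j i := by
          refine Finset.sum_congr rfl fun i _ => Finset.sum_congr rfl fun j _ => ?_
          have h := congrFun (congrFun hNt j) i
          rw [Matrix.transpose_apply] at h
          rw [sq, h]
      _ = Matrix.trace (N * N) := by
          simp [Matrix.trace, Matrix.diag, Matrix.mul_apply]
      _ = 0 := h0
  have hN0 : N = 0 := by
    ext i j
    have h1 : ∀ i ∈ Finset.univ (α := Fin (n+1)), (0:ℝ) ≤ ∑ j, (N i j) ^ 2 :=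
      fun i _ => Finset.sum_nonneg fun j _ => sq_nonneg _
    have h2 := (Finset.sum_eq_zero_iff_of_nonneg h1).mp hsq i (Finset.mem_univ i)
    have h3 := (Finset.sum_eq_zero_iff_of_nonneg
      (fun j _ => sq_nonneg (N i j))).mp h2 j (Finset.mem_univ j)
    simpa using (pow_eq_zero_iff two_ne_zero).mp h3
  have p6 : P + Qs = 1 := by
    have h : 1 - (P + Qs) = 0 := by rw [← sub_sub]; exact hN0
    exact (sub_eq_zero.mp h).symm
  exact ⟨p1, p2, p3, p4, p5, p6⟩
end

section
/- The average mixing matrix of the continuous quantum walk generated by the Laplacian of the path P_n equals (1/n²)·((n-1)J + (n/2)(I + T)), where T swaps j with n+1-j. -/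
open Real Finset Matrix

noncomputable def w (n r j : ℕ) : ℝ := Real.cos (π * r * (2*j+1) / (2*n))

noncomputable def Em (n : ℕ) (r : Fin n) : Matrix (Fin n) (Fin n) ℝ :=
  Matrix.of fun j k => (if (r:ℕ) = 0 then (1:ℝ) else 2)/n * (w n r j * w n r k)

lemma Em_apply (n : ℕ) (r : Fin n) (j k : Fin n) :
    Em n r j k = (if (r:ℕ) = 0 then (1:ℝ) else 2)/n * (w n r j * w n r k) := rfl



lemma tele (n : ℕ) (z φ : ℝ) :
    2 * Real.sin (z/2) * ∑ j ∈ Finset.range n, Real.cos (j*z + φ)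
      = Real.sin (n*z - z/2 + φ) - Real.sin (-(z/2) + φ) := by
  have key := Finset.sum_range_sub (fun j => Real.sin ((j:ℝ)*z - z/2 + φ)) n
  calc 2 * Real.sin (z/2) * ∑ j ∈ Finset.range n, Real.cos (j*z + φ)
      = ∑ j ∈ Finset.range n,
          (Real.sin (((j:ℝ)+1)*z - z/2 + φ) - Real.sin ((j:ℝ)*z - z/2 + φ)) := by
        rw [Finset.mul_sum]
        refine Finset.sum_congr rfl fun j _ => ?_
        rw [Real.sin_sub_sin]
        have h1 : ((((j:ℝ)+1)*z - z/2 + φ) - ((j:ℝ)*z - z/2 + φ))/2 = z/2 := by ring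
        have h2 : ((((j:ℝ)+1)*z - z/2 + φ) + ((j:ℝ)*z - z/2 + φ))/2 = (j:ℝ)*z + φ := by ring
        rw [h1, h2]
    _ = Real.sin ((n:ℝ)*z - z/2 + φ) - Real.sin ((0:ℕ)*z - z/2 + φ) := by
        rw [← key]
        refine Finset.sum_congr rfl fun j _ => ?_
        push_cast
        ring_nf
    _ = Real.sin (n*z - z/2 + φ) - Real.sin (-(z/2) + φ) := by norm_num

lemma sin_ne (n : ℕ) (hn : 0 < n) (m : ℤ) (h : ¬ ((2*(n:ℤ)) ∣ m)) :
    Real.sin (π * m / (2*n)) ≠ 0 := by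
  intro hs
  rw [Real.sin_eq_zero_iff] at hs
  obtain ⟨k, hk⟩ := hs
  apply h
  refine ⟨k, ?_⟩
  have hπ := Real.pi_ne_zero
  have hn' : (n:ℝ) ≠ 0 := Nat.cast_ne_zero.mpr hn.ne'
  field_simp at hk
  have h2 : π * ((m:ℝ)) = π * (2*(n:ℝ)*k) := by linear_combination (-π) * hk
  have h3 : (m:ℝ) = 2*(n:ℝ)*k := mul_left_cancel₀ hπ h2
  exact_mod_cast h3

lemma Csum (n : ℕ) (hn : 0 < n) (m : ℤ) (h : ¬ ((2*(n:ℤ)) ∣ m)) :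
    ∑ j ∈ Finset.range n, Real.cos (π * m * (2*j+1) / (2*n)) = 0 := by
  have hs := sin_ne n hn m h
  have ht := tele n (π*m/n) (π*m/(2*n))
  have hn' : (n:ℝ) ≠ 0 := Nat.cast_ne_zero.mpr hn.ne'
  have e2 : (π*m/n)/2 = π * m / (2*n) := by ring
  rw [e2] at ht
  have e3 : (n:ℝ)*(π*m/n) - π*m/(2*n) + π*m/(2*n) = m * π := by field_simp; ring
  have e4 : -(π*m/(2*n)) + π*m/(2*n) = 0 := by ring
  rw [e3, e4, Real.sin_int_mul_pi, Real.sin_zero, sub_zero] at ht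
  have e1 : ∀ j : ℕ, (j:ℝ)*(π*m/n) + π*m/(2*n) = π * m * (2*j+1) / (2*n) := by
    intro j; field_simp
  simp only [e1] at ht
  rcases mul_eq_zero.mp ht with h1 | h1
  · rcases mul_eq_zero.mp h1 with h2 | h2
    · norm_num at h2
    · exact absurd h2 hs
  · exact h1

lemma Dsum (n : ℕ) (hn : 0 < n) (m : ℤ) :
    ∑ r ∈ Finset.range n, Real.cos (π * m * r / n)
      = if (2*(n:ℤ)) ∣ m then (n:ℝ) else if Even m then 0 else 1 := by
  have hn' : (n:ℝ) ≠ 0 := Nat.cast_ne_zero.mpr hn.ne'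
  by_cases hd : (2*(n:ℤ)) ∣ m
  · rw [if_pos hd]
    obtain ⟨k, hk⟩ := hd
    have : ∀ r ∈ Finset.range n, Real.cos (π * m * r / n) = 1 := by
      intro r _
      have harg : π * (m:ℝ) * r / n = ((k*r : ℤ):ℝ) * (2*π) := by
        rw [hk]; push_cast; field_simp
      rw [harg, Real.cos_int_mul_two_pi]
    rw [Finset.sum_congr rfl this]
    simp
  · rw [if_neg hd]
    have hs := sin_ne n hn m hd
    have ht := tele n (π*m/n) 0
    have e2 : (π*m/n)/2 = π * m / (2*n) := by ring
    rw [e2] at ht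
    simp only [add_zero] at ht
    have e3 : (n:ℝ)*(π*m/n) - π*m/(2*n) = (m:ℝ)*π - π*m/(2*n) := by field_simp
    rw [e3] at ht
    have e5 : Real.sin ((m:ℝ)*π - π*m/(2*n))
        = - Real.cos ((m:ℝ)*π) * Real.sin (π*m/(2*n)) := by
      rw [Real.sin_sub]
      have : Real.sin ((m:ℝ)*π) = 0 := Real.sin_int_mul_pi m
      rw [this]; ring
    rw [e5, Real.sin_neg] at ht
    have e1 : ∀ j : ℕ, (j:ℝ)*(π*m/n) = π * m * j / n := by intro j; ring
    simp only [e1] at ht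
    by_cases hev : Even m
    · rw [if_pos hev]
      obtain ⟨k, hk⟩ := hev
      have hc : Real.cos ((m:ℝ)*π) = 1 := by
        have : (m:ℝ)*π = (k:ℤ)*(2*π) := by rw [hk]; push_cast; ring
        rw [this, Real.cos_int_mul_two_pi]
      rw [hc] at ht
      have h0 : (2:ℝ) * Real.sin (π*m/(2*n)) * (∑ r ∈ Finset.range n, Real.cos (π * m * r / n)) = 0 := by
        rw [ht]; ring
      rcases mul_eq_zero.mp h0 with h1 | h1
      · rcases mul_eq_zero.mp h1 with h2 | h2
        · norm_num at h2
        · exact absurd h2 hs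
      · exact h1
    · rw [if_neg hev]
      obtain ⟨k, hk⟩ := Int.not_even_iff_odd.mp hev
      have hc : Real.cos ((m:ℝ)*π) = -1 := by
        have : (m:ℝ)*π = (k:ℤ)*(2*π) + π := by rw [hk]; push_cast; ring
        rw [this, Real.cos_int_mul_two_pi_add_pi]
      rw [hc] at ht
      have h0 : (2:ℝ) * Real.sin (π*m/(2*n)) * (∑ r ∈ Finset.range n, Real.cos (π * m * r / n))
          = 2 * Real.sin (π*m/(2*n)) * 1 := by rw [ht]; ring
      exact mul_left_cancel₀ (mul_ne_zero two_ne_zero hs) h0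



lemma not_dvd_of (n : ℕ) (m : ℤ) (h0 : m ≠ 0) (h1 : m.natAbs < 2*n) :
    ¬ ((2*(n:ℤ)) ∣ m) := by
  intro hd
  have h2 : (2*(n:ℤ)) ∣ |m| := (dvd_abs _ _).mpr hd
  have h3 := Int.le_of_dvd (abs_pos.mpr h0) h2
  have h4 : (2*(n:ℤ)) ≤ m.natAbs := by rwa [Int.abs_eq_natAbs] at h3
  have h5 : ((2*n : ℕ) : ℤ) ≤ (m.natAbs : ℤ) := by push_cast; linarith
  have := Int.ofNat_le.mp h5
  omega

lemma Ct_eq (n : ℕ) (hn : 0 < n) (m : ℤ) (hm : m.natAbs < 2*n) :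
    ∑ j ∈ Finset.range n, Real.cos (π * m * (2*j+1) / (2*n))
      = if m = 0 then (n:ℝ) else 0 := by
  by_cases h0 : m = 0
  · subst h0
    simp
  · rw [if_neg h0]
    exact Csum n hn m (not_dvd_of n m h0 hm)

lemma cos_mul_cos (a b : ℝ) :
    Real.cos a * Real.cos b = (Real.cos (a+b) + Real.cos (a-b))/2 := by
  rw [Real.cos_add, Real.cos_sub]; ring

lemma inner_w (n : ℕ) (hn : 0 < n) (r s : Fin n) :
    ∑ j : Fin n, w n r j * w n s j
      = if r = s then (if (r:ℕ) = 0 then (n:ℝ) else (n:ℝ)/2) else 0 := by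
  have hn' : (n:ℝ) ≠ 0 := Nat.cast_ne_zero.mpr hn.ne'
  rw [Fin.sum_univ_eq_sum_range (fun j => w n r j * w n s j) n]
  have key : ∀ j : ℕ, w n r j * w n s j
      = (Real.cos (π * (((r:ℕ)+(s:ℕ) : ℤ)) * (2*j+1) / (2*n))
        + Real.cos (π * (((r:ℕ)-(s:ℕ) : ℤ)) * (2*j+1) / (2*n))) / 2 := by
    intro j
    unfold w
    rw [cos_mul_cos]
    have e1 : π * (r:ℕ) * (2*j+1) / (2*n) + π * (s:ℕ) * (2*j+1) / (2*n)
        = π * (((r:ℕ)+(s:ℕ) : ℤ)) * (2*j+1) / (2*n) := by push_cast; ring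
    have e2 : π * (r:ℕ) * (2*j+1) / (2*n) - π * (s:ℕ) * (2*j+1) / (2*n)
        = π * (((r:ℕ)-(s:ℕ) : ℤ)) * (2*j+1) / (2*n) := by push_cast; ring
    rw [e1, e2]
  simp only [key]
  rw [← Finset.sum_div, Finset.sum_add_distrib]
  have hC1 := Ct_eq n hn ((r:ℕ)+(s:ℕ) : ℤ)
  have hC2 := Ct_eq n hn ((r:ℕ)-(s:ℕ) : ℤ)
  have hr := r.isLt; have hs := s.isLt
  by_cases hrs : r = s
  · subst hrs
    by_cases h0 : (r:ℕ) = 0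
    · rw [if_pos rfl, if_pos h0]
      have : ((r:ℕ)+(r:ℕ) : ℤ) = 0 := by omega
      rw [hC1 (by omega), hC2 (by omega)]
      rw [if_pos this, if_pos (by omega : ((r:ℕ)-(r:ℕ) : ℤ) = 0)]
      ring
    · rw [if_pos rfl, if_neg h0]
      rw [hC1 (by omega), hC2 (by omega)]
      rw [if_neg (by omega : ¬((r:ℕ)+(r:ℕ) : ℤ) = 0), if_pos (by omega : ((r:ℕ)-(r:ℕ) : ℤ) = 0)]
      ring
  · rw [if_neg hrs]
    have hne : (r:ℕ) ≠ (s:ℕ) := fun h => hrs (Fin.ext h)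
    rw [hC1 (by omega), hC2 (by omega)]
    rw [if_neg (by omega : ¬((r:ℕ)+(s:ℕ) : ℤ) = 0), if_neg (by omega : ¬((r:ℕ)-(s:ℕ) : ℤ) = 0)]
    ring


lemma Em_sym (n : ℕ) (r : Fin n) : (Em n r)ᵀ = Em n r := by
  ext j k
  show Em n r k j = Em n r j k
  rw [Em_apply, Em_apply]; ring

lemma Em_mul (n : ℕ) (hn : 0 < n) (r s : Fin n) :
    Em n r * Em n s = if r = s then Em n r else 0 := by
  have hn' : (n:ℝ) ≠ 0 := Nat.cast_ne_zero.mpr hn.ne'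
  ext j k
  rw [Matrix.mul_apply]
  have e1 : ∀ l : Fin n, Em n r j l * Em n s l k
      = ((if (r:ℕ) = 0 then (1:ℝ) else 2)/n * (if (s:ℕ) = 0 then (1:ℝ) else 2)/n
          * (w n r j * w n s k)) * (w n r l * w n s l) := by
    intro l; simp only [Em_apply]; ring
  rw [Finset.sum_congr rfl (fun l _ => e1 l), ← Finset.mul_sum, inner_w n hn r s]
  by_cases hrs : r = s
  · subst hrs
    rw [if_pos rfl, if_pos rfl, Em_apply]
    by_cases h0 : (r:ℕ) = 0
    · simp only [if_pos h0]; field_simp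
    · simp only [if_neg h0]; field_simp
  · rw [if_neg hrs, if_neg hrs]
    simp

lemma Em_sum (n : ℕ) (hn : 0 < n)
    (hD : ∀ m : ℤ, (∑ r ∈ Finset.range n, Real.cos (π * m * r / n))
      = if (2*(n:ℤ)) ∣ m then (n:ℝ) else if Even m then 0 else 1) :
    ∑ r : Fin n, Em n r = 1 := by
  have hn' : (n:ℝ) ≠ 0 := Nat.cast_ne_zero.mpr hn.ne'
  ext j k
  rw [Matrix.sum_apply]
  simp only [Em_apply]
  -- convert to range sum
  rw [Fin.sum_univ_eq_sum_range
    (fun r => (if r = 0 then (1:ℝ) else 2)/n * (w n r j * w n r k)) n]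
  have split : ∀ r : ℕ, (if r = 0 then (1:ℝ) else 2)/n * (w n r j * w n r k)
      = (2/n) * (w n r j * w n r k)
        - (if r = 0 then (1/n) * (w n r j * w n r k) else 0) := by
    intro r
    by_cases h : r = 0
    · rw [if_pos h, if_pos h]; ring
    · rw [if_neg h, if_neg h]; ring
  rw [Finset.sum_congr rfl (fun r _ => split r), Finset.sum_sub_distrib]
  have : (∑ r ∈ Finset.range n, if r = 0 then (1/(n:ℝ)) * (w n r j * w n r k) else 0)
      = (1/(n:ℝ)) * (w n 0 j * w n 0 k) := by
    rw [Finset.sum_ite_eq' (Finset.range n) 0 (fun r => (1/(n:ℝ)) * (w n r j * w n r k))]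
    rw [if_pos (Finset.mem_range.mpr hn)]
  rw [this]
  have w0 : ∀ l : ℕ, w n 0 l = 1 := by
    intro l; unfold w; push_cast; rw [show π * 0 * (2*(l:ℝ)+1) / (2*n) = 0 by ring, Real.cos_zero]
  rw [w0 j, w0 k]
  have prodrw : ∀ r : ℕ, w n r j * w n r k
      = (Real.cos (π * (((j:ℕ)+(k:ℕ)+1 : ℤ)) * r / n)
        + Real.cos (π * (((j:ℕ)-(k:ℕ) : ℤ)) * r / n)) / 2 := by
    intro r
    unfold w
    rw [show Real.cos (π * r * (2*(j:ℕ)+1) / (2*n)) * Real.cos (π * r * (2*(k:ℕ)+1) / (2*n))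
      = (Real.cos (π * r * (2*(j:ℕ)+1) / (2*n) + π * r * (2*(k:ℕ)+1) / (2*n))
        + Real.cos (π * r * (2*(j:ℕ)+1) / (2*n) - π * r * (2*(k:ℕ)+1) / (2*n))) / 2
      from by rw [Real.cos_add, Real.cos_sub]; ring]
    congr 2
    · push_cast; field_simp; ring
    · push_cast; field_simp; ring
  rw [Finset.sum_congr rfl (fun r _ => congrArg (fun x => (2/(n:ℝ)) * x) (prodrw r))]
  simp only [← Finset.mul_sum]
  rw [show (∑ r ∈ Finset.range n,
      (Real.cos (π * (((j:ℕ)+(k:ℕ)+1 : ℤ)) * r / n)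
        + Real.cos (π * (((j:ℕ)-(k:ℕ) : ℤ)) * r / n)) / 2)
    = ((∑ r ∈ Finset.range n, Real.cos (π * (((j:ℕ)+(k:ℕ)+1 : ℤ)) * r / n))
      + (∑ r ∈ Finset.range n, Real.cos (π * (((j:ℕ)-(k:ℕ) : ℤ)) * r / n))) / 2
    from by rw [← Finset.sum_div, Finset.sum_add_distrib]]
  rw [hD (((j:ℕ)+(k:ℕ)+1 : ℤ)), hD (((j:ℕ)-(k:ℕ) : ℤ))]
  have hj := j.isLt; have hk := k.isLt
  by_cases hjk : j = k
  · subst hjk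
    rw [Matrix.one_apply_eq]
    have hnd : ¬ (2*(n:ℤ)) ∣ ((j:ℕ)+(j:ℕ)+1 : ℤ) := by
      rintro ⟨c, hc⟩
      have hev : Even (2*(n:ℤ)*c) := ⟨n*c, by ring⟩
      rw [← hc] at hev
      obtain ⟨t, ht⟩ := hev
      omega
    rw [if_neg hnd,
      if_neg (by rintro ⟨t, ht⟩; omega : ¬ Even ((j:ℕ)+(j:ℕ)+1 : ℤ)),
      if_pos (by simp : (2*(n:ℤ)) ∣ ((j:ℕ)-(j:ℕ) : ℤ))]
    field_simp
    ring
  · rw [Matrix.one_apply_ne hjk]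
    have hne : (j:ℕ) ≠ (k:ℕ) := fun h => hjk (Fin.ext h)
    have hd1 : ¬ (2*(n:ℤ)) ∣ ((j:ℕ)+(k:ℕ)+1 : ℤ) :=
      not_dvd_of n _ (by omega) (by omega)
    have hd2 : ¬ (2*(n:ℤ)) ∣ ((j:ℕ)-(k:ℕ) : ℤ) :=
      not_dvd_of n _ (by omega) (by omega)
    rw [if_neg hd1, if_neg hd2]
    by_cases hev : Even ((j:ℕ)+(k:ℕ)+1 : ℤ)
    · obtain ⟨u, hu⟩ := hev
      rw [if_pos ⟨u, hu⟩, if_neg (by rintro ⟨t, ht⟩; omega : ¬ Even ((j:ℕ)-(k:ℕ) : ℤ))]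
      ring
    · rw [if_neg hev]
      have : Even ((j:ℕ)-(k:ℕ) : ℤ) := by
        rcases Int.even_or_odd (((j:ℕ):ℤ)-(k:ℕ)) with h | h
        · exact h
        · obtain ⟨t, ht⟩ := h
          exact absurd ⟨t+(k:ℕ)+1, by omega⟩ hev
      rw [if_pos this]
      ring


lemma scalar_eig (n : ℕ) (hn : 0 < n) (r : Fin n) (jv : ℕ) (hj : jv < n) :
    ((if 0 < jv then (1:ℝ) else 0) + (if jv+1 < n then 1 else 0)) * w n r jv
      - (if jv+1 < n then w n r (jv+1) else 0) - (if 0 < jv then w n r (jv-1) else 0)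
    = (2 - 2*Real.cos (π * r / n)) * w n r jv := by
  have hn' : (n:ℝ) ≠ 0 := Nat.cast_ne_zero.mpr hn.ne'
  have hwj : w n r jv = Real.cos (π * r * (2*jv+1) / (2*n)) := rfl
  have hsucc : w n r (jv+1) = Real.cos (π * r * (2*jv+1) / (2*n) + π * r / n) := by
    unfold w
    congr 1
    push_cast
    field_simp
    ring
  have hpred : 0 < jv → w n r (jv-1) = Real.cos (π * r * (2*jv+1) / (2*n) - π * r / n) := by
    intro h
    unfold w
    congr 1
    have h1 : ((jv - 1 : ℕ) : ℝ) = (jv : ℝ) - 1 := by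
      have : (1:ℕ) ≤ jv := h
      push_cast [this]
      ring
    rw [h1]
    field_simp
    ring
  have hadd : Real.cos (π * r * (2*jv+1) / (2*n) + π * r / n)
      + Real.cos (π * r * (2*jv+1) / (2*n) - π * r / n)
      = 2 * Real.cos (π * r * (2*jv+1) / (2*n)) * Real.cos (π * r / n) := by
    rw [Real.cos_add, Real.cos_sub]; ring
  by_cases h0 : 0 < jv
  · by_cases h1 : jv + 1 < n
    · rw [if_pos h0, if_pos h1, if_pos h1, if_pos h0, hpred h0, hsucc, hwj]
      linear_combination -hadd
    · rw [if_pos h0, if_neg h1, if_neg h1, if_pos h0, hpred h0, hwj]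
      have hjn : jv + 1 = n := by omega
      have hxt : Real.cos (π * r * (2*jv+1) / (2*n) + π * r / n)
          = Real.cos (π * r * (2*jv+1) / (2*n)) := by
        have e : π * (r:ℕ) * (2*jv+1) / (2*(n:ℝ)) + π * r / n
            = (r:ℕ) * (2*π) - π * (r:ℕ) * (2*jv+1) / (2*(n:ℝ)) := by
          have hjnR : (jv:ℝ) = (n:ℝ) - 1 := by
            rw [← hjn]; push_cast; ring
          rw [hjnR]
          field_simp
          ring
        rw [e, Real.cos_nat_mul_two_pi_sub]
      linear_combination -hadd + hxt
  · have hj0 : jv = 0 := by omega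
    by_cases h1 : jv + 1 < n
    · rw [if_neg h0, if_pos h1, if_pos h1, if_neg h0, hsucc, hwj]
      have hxt : Real.cos (π * r * (2*jv+1) / (2*n) - π * r / n)
          = Real.cos (π * r * (2*jv+1) / (2*n)) := by
        have e : π * (r:ℕ) * (2*jv+1) / (2*(n:ℝ)) - π * r / n
            = -(π * (r:ℕ) * (2*jv+1) / (2*(n:ℝ))) := by
          rw [hj0]
          push_cast
          field_simp
          ring
        rw [e, Real.cos_neg]
      linear_combination -hadd + hxt
    · have hn1 : n = 1 := by omega
      have hr : (r:ℕ) = 0 := by have := r.isLt; omega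
      rw [if_neg h0, if_neg h1, if_neg h1, if_neg h0]
      have : Real.cos (π * r / n) = 1 := by
        rw [hr]; push_cast; rw [show π * 0 / (n:ℝ) = 0 by ring, Real.cos_zero]
      rw [this]
      ring

lemma L_mul_Em (n : ℕ) (hn : 0 < n) (L : Matrix (Fin n) (Fin n) ℝ)
    (hL : ∀ j k, L j k =
      (if j = k then ((if 0 < j.val then (1 : ℝ) else 0) + (if j.val + 1 < n then 1 else 0))
        else 0) - (if j.val + 1 = k.val ∨ k.val + 1 = j.val then 1 else 0))
    (r : Fin n) :
    L * Em n r = (2 - 2*Real.cos (π * r / n)) • Em n r := by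
  ext j k
  rw [Matrix.mul_apply, Matrix.smul_apply, Em_apply, smul_eq_mul]
  have key : ∀ l : Fin n, L j l * Em n r l k
      = ((if (r:ℕ) = 0 then (1:ℝ) else 2)/n * w n r k) * (L j l * w n r l) := by
    intro l; rw [Em_apply]; ring
  rw [Finset.sum_congr rfl (fun l _ => key l), ← Finset.mul_sum]
  have hrow : ∑ l : Fin n, L j l * w n r l
      = (2 - 2*Real.cos (π * r / n)) * w n r j := by
    have hLl : ∀ l : Fin n, L j l * w n r l
        = (if (j:ℕ) = (l:ℕ) then ((if 0 < (j:ℕ) then (1:ℝ) else 0) + (if (j:ℕ)+1 < n then 1 else 0)) * w n r l else 0)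
          - ((if (j:ℕ)+1 = (l:ℕ) then w n r l else 0) + (if (l:ℕ)+1 = (j:ℕ) then w n r l else 0)) := by
      intro l
      rw [hL j l]
      simp only [Fin.ext_iff]
      by_cases hd : (j:ℕ) = (l:ℕ)
      · rw [if_pos hd, if_pos hd]
        have h1 : ¬ ((j:ℕ)+1 = (l:ℕ)) := by omega
        have h2 : ¬ ((l:ℕ)+1 = (j:ℕ)) := by omega
        rw [if_neg h1, if_neg h2, if_neg (by tauto : ¬((j:ℕ)+1 = (l:ℕ) ∨ (l:ℕ)+1 = (j:ℕ)))]
        ring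
      · rw [if_neg hd, if_neg hd]
        by_cases ha : (j:ℕ)+1 = (l:ℕ)
        · rw [if_pos ha, if_pos (Or.inl ha), if_neg (by omega : ¬((l:ℕ)+1 = (j:ℕ)))]
          ring
        · by_cases hb : (l:ℕ)+1 = (j:ℕ)
          · rw [if_neg ha, if_pos hb, if_pos (Or.inr hb)]
            ring
          · rw [if_neg ha, if_neg hb, if_neg (by tauto)]
            ring
    rw [Finset.sum_congr rfl (fun l _ => hLl l), Finset.sum_sub_distrib, Finset.sum_add_distrib]
    -- evaluate the three sums over l, converting to range sums
    rw [Fin.sum_univ_eq_sum_range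
      (fun l => if (j:ℕ) = l then ((if 0 < (j:ℕ) then (1:ℝ) else 0) + (if (j:ℕ)+1 < n then 1 else 0)) * w n r l else 0) n,
      Fin.sum_univ_eq_sum_range (fun l => if (j:ℕ)+1 = l then w n r l else 0) n,
      Fin.sum_univ_eq_sum_range (fun l => if l+1 = (j:ℕ) then w n r l else 0) n]
    rw [Finset.sum_ite_eq (Finset.range n) (j:ℕ)
      (fun l => ((if 0 < (j:ℕ) then (1:ℝ) else 0) + (if (j:ℕ)+1 < n then 1 else 0)) * w n r l),
      if_pos (Finset.mem_range.mpr j.isLt)]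
    rw [Finset.sum_ite_eq (Finset.range n) ((j:ℕ)+1) (fun l => w n r l)]
    have hthird : (∑ l ∈ Finset.range n, if l+1 = (j:ℕ) then w n r l else 0)
        = if 0 < (j:ℕ) then w n r ((j:ℕ)-1) else 0 := by
      by_cases h0 : 0 < (j:ℕ)
      · rw [if_pos h0]
        obtain ⟨m, hm⟩ := Nat.exists_eq_succ_of_ne_zero (by omega : (j:ℕ) ≠ 0)
        have hiff : ∀ l, (l+1 = (j:ℕ)) ↔ (l = m) := by intro l; omega
        simp only [hiff]
        rw [Finset.sum_ite_eq' (Finset.range n) m (fun l => w n r l),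
          if_pos (Finset.mem_range.mpr (by omega : m < n))]
        congr 1
        omega
      · rw [if_neg h0]
        have : ∀ l ∈ Finset.range n, (if l+1 = (j:ℕ) then w n r l else 0) = 0 := by
          intro l _; rw [if_neg (by omega)]
        rw [Finset.sum_congr rfl this]
        simp
    rw [hthird]
    simp only [Finset.mem_range]
    have := scalar_eig n hn r (j:ℕ) j.isLt
    by_cases h1 : (j:ℕ)+1 < n
    · simp only [if_pos h1] at this ⊢
      linear_combination this
    · simp only [if_neg h1] at this ⊢
      linear_combination this
  rw [hrow]
  ring


lemma Em_mix (n : ℕ) (hn : 0 < n) (j k : Fin n) :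
    (∑ r : Fin n, (Em n r ⊙ Em n r)) j k
      = (1/(n:ℝ)^2) * (((n:ℝ)-1)
          + ((n:ℝ)/2) * ((if j = k then (1:ℝ) else 0)
            + (if (j:ℕ)+(k:ℕ)+1 = n then (1:ℝ) else 0))) := by
  have hn' : (n:ℝ) ≠ 0 := Nat.cast_ne_zero.mpr hn.ne'
  rw [Matrix.sum_apply]
  have entry : ∀ r : Fin n, (Em n r ⊙ Em n r) j k
      = ((if (r:ℕ) = 0 then (1:ℝ) else 2)/n)^2 * ((w n r j)^2 * (w n r k)^2) := by
    intro r
    rw [Matrix.hadamard_apply, Em_apply]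
    ring
  rw [Finset.sum_congr rfl (fun r _ => entry r)]
  rw [Fin.sum_univ_eq_sum_range
    (fun r => ((if r = 0 then (1:ℝ) else 2)/n)^2 * ((w n r j)^2 * (w n r k)^2)) n]
  have split : ∀ r : ℕ, ((if r = 0 then (1:ℝ) else 2)/n)^2 * ((w n r j)^2 * (w n r k)^2)
      = (4/(n:ℝ)^2) * ((w n r j)^2 * (w n r k)^2)
        - (if r = 0 then (3/(n:ℝ)^2) * ((w n r j)^2 * (w n r k)^2) else 0) := by
    intro r
    by_cases h : r = 0
    · rw [if_pos h, if_pos h]; ring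
    · rw [if_neg h, if_neg h]; ring
  rw [Finset.sum_congr rfl (fun r _ => split r), Finset.sum_sub_distrib]
  have w0 : ∀ l : ℕ, w n 0 l = 1 := by
    intro l; unfold w; push_cast
    rw [show π * 0 * (2*(l:ℝ)+1) / (2*n) = 0 by ring, Real.cos_zero]
  have h2nd : (∑ r ∈ Finset.range n,
      if r = 0 then (3/(n:ℝ)^2) * ((w n r j)^2 * (w n r k)^2) else 0)
      = 3/(n:ℝ)^2 := by
    rw [Finset.sum_ite_eq' (Finset.range n) 0
      (fun r => (3/(n:ℝ)^2) * ((w n r j)^2 * (w n r k)^2)),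
      if_pos (Finset.mem_range.mpr hn), w0, w0]
    ring
  rw [h2nd]
  have qlem : ∀ r : ℕ, (w n r j)^2 * (w n r k)^2
      = 1/4 + Real.cos (π * ((2*(j:ℕ)+1 : ℤ)) * r / n)/4
        + Real.cos (π * ((2*(k:ℕ)+1 : ℤ)) * r / n)/4
        + Real.cos (π * ((2*(j:ℕ)+2*(k:ℕ)+2 : ℤ)) * r / n)/8
        + Real.cos (π * ((2*(j:ℕ)-2*(k:ℕ) : ℤ)) * r / n)/8 := by
    intro r
    have hsqj : (w n r j)^2 = 1/2 + Real.cos (π * ((2*(j:ℕ)+1 : ℤ)) * r / n)/2 := by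
      unfold w
      rw [Real.cos_sq]
      congr 2
      push_cast
      field_simp
    have hsqk : (w n r k)^2 = 1/2 + Real.cos (π * ((2*(k:ℕ)+1 : ℤ)) * r / n)/2 := by
      unfold w
      rw [Real.cos_sq]
      congr 2
      push_cast
      field_simp
    have hprod : Real.cos (π * ((2*(j:ℕ)+1 : ℤ)) * r / n) * Real.cos (π * ((2*(k:ℕ)+1 : ℤ)) * r / n)
        = (Real.cos (π * ((2*(j:ℕ)+2*(k:ℕ)+2 : ℤ)) * r / n)
          + Real.cos (π * ((2*(j:ℕ)-2*(k:ℕ) : ℤ)) * r / n))/2 := by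
      rw [show (Real.cos (π * ((2*(j:ℕ)+2*(k:ℕ)+2 : ℤ)) * r / n) : ℝ)
          = Real.cos (π * ((2*(j:ℕ)+1 : ℤ)) * r / n + π * ((2*(k:ℕ)+1 : ℤ)) * r / n) from by
            congr 1; push_cast; ring,
        show (Real.cos (π * ((2*(j:ℕ)-2*(k:ℕ) : ℤ)) * r / n) : ℝ)
          = Real.cos (π * ((2*(j:ℕ)+1 : ℤ)) * r / n - π * ((2*(k:ℕ)+1 : ℤ)) * r / n) from by
            congr 1; push_cast; ring,
        Real.cos_add, Real.cos_sub]
      ring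
    rw [hsqj, hsqk]
    linear_combination hprod / 4
  rw [Finset.sum_congr rfl (fun r _ =>
    congrArg (fun x => (4/(n:ℝ)^2) * x) (qlem r))]
  simp only [← Finset.mul_sum]
  rw [show ∀ f1 f2 f3 f4 : ℕ → ℝ, (∑ r ∈ Finset.range n,
      (1/4 + f1 r/4 + f2 r/4 + f3 r/8 + f4 r/8))
      = (n:ℝ)/4 + (∑ r ∈ Finset.range n, f1 r)/4 + (∑ r ∈ Finset.range n, f2 r)/4
        + (∑ r ∈ Finset.range n, f3 r)/8 + (∑ r ∈ Finset.range n, f4 r)/8 from by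
    intro f1 f2 f3 f4
    simp only [Finset.sum_add_distrib, Finset.sum_div]
    rw [Finset.sum_const, Finset.card_range]
    push_cast
    ring]
  rw [Dsum n hn ((2*(j:ℕ)+1 : ℤ)), Dsum n hn ((2*(k:ℕ)+1 : ℤ)),
    Dsum n hn ((2*(j:ℕ)+2*(k:ℕ)+2 : ℤ)), Dsum n hn ((2*(j:ℕ)-2*(k:ℕ) : ℤ))]
  have hj := j.isLt; have hk := k.isLt
  -- odd ones
  rw [if_neg (not_dvd_of n _ (by omega) (by omega) :
        ¬ (2*(n:ℤ)) ∣ (2*(j:ℕ)+1 : ℤ)),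
    if_neg (by rintro ⟨t, ht⟩; omega : ¬ Even (2*(j:ℕ)+1 : ℤ)),
    if_neg (not_dvd_of n _ (by omega) (by omega) :
        ¬ (2*(n:ℤ)) ∣ (2*(k:ℕ)+1 : ℤ)),
    if_neg (by rintro ⟨t, ht⟩; omega : ¬ Even (2*(k:ℕ)+1 : ℤ))]
  -- the T term
  have hT : (if (2*(n:ℤ)) ∣ (2*(j:ℕ)+2*(k:ℕ)+2 : ℤ) then (n:ℝ)
      else if Even (2*(j:ℕ)+2*(k:ℕ)+2 : ℤ) then 0 else 1)
      = if (j:ℕ)+(k:ℕ)+1 = n then (n:ℝ) else 0 := by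
    by_cases ht : (j:ℕ)+(k:ℕ)+1 = n
    · rw [if_pos ht, if_pos ⟨1, by push_cast; omega⟩]
    · rw [if_neg ht]
      have hnd : ¬ (2*(n:ℤ)) ∣ (2*(j:ℕ)+2*(k:ℕ)+2 : ℤ) := by
        intro hdvd
        have e : (2*(j:ℕ)+2*(k:ℕ)+2 : ℤ) = ((2*((j:ℕ)+(k:ℕ)+1) : ℕ) : ℤ) := by push_cast; ring
        rw [e, show (2*(n:ℤ)) = ((2*n : ℕ) : ℤ) from by push_cast; ring,
          Int.natCast_dvd_natCast] at hdvd
        have hnd2 : n ∣ (j:ℕ)+(k:ℕ)+1 :=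
          (mul_dvd_mul_iff_left (by norm_num : (2:ℕ) ≠ 0)).mp hdvd
        have hle := Nat.le_of_dvd (by omega) hnd2
        have hsub : n ∣ ((j:ℕ)+(k:ℕ)+1 - n) := (Nat.dvd_sub hnd2 dvd_rfl)
        have := Nat.eq_zero_of_dvd_of_lt hsub (by omega)
        omega
      rw [if_neg hnd, if_pos ⟨((j:ℕ)+(k:ℕ)+1 : ℤ), by push_cast; ring⟩]
  -- the diag term
  have hDg : (if (2*(n:ℤ)) ∣ (2*(j:ℕ)-2*(k:ℕ) : ℤ) then (n:ℝ)
      else if Even (2*(j:ℕ)-2*(k:ℕ) : ℤ) then 0 else 1)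
      = if j = k then (n:ℝ) else 0 := by
    by_cases hjk : j = k
    · subst hjk
      rw [if_pos rfl, if_pos (by simp : (2*(n:ℤ)) ∣ (2*(j:ℕ)-2*(j:ℕ) : ℤ))]
    · rw [if_neg hjk]
      have hne : (j:ℕ) ≠ (k:ℕ) := fun h => hjk (Fin.ext h)
      rw [if_neg (not_dvd_of n _ (by omega) (by omega)),
        if_pos ⟨((j:ℕ)-(k:ℕ) : ℤ), by push_cast; ring⟩]
  rw [hT, hDg]
  by_cases hjk : j = k <;> by_cases ht : (j:ℕ)+(k:ℕ)+1 = n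
  · rw [if_pos hjk, if_pos hjk, if_pos ht, if_pos ht]; field_simp; ring
  · rw [if_pos hjk, if_pos hjk, if_neg ht, if_neg ht]; field_simp; ring
  · rw [if_neg hjk, if_neg hjk, if_pos ht, if_pos ht]; field_simp; ring
  · rw [if_neg hjk, if_neg hjk, if_neg ht, if_neg ht]; field_simp; ring


-- injectivity of the eigenvalue map
lemma ev_inj (n : ℕ) (hn : 0 < n) :
    Function.Injective (fun r : Fin n => 2 - 2*Real.cos (π * r / n)) := by
  intro r s h
  simp only at h
  have hc : Real.cos (π * r / n) = Real.cos (π * s / n) := by linarith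
  have hn' : (0:ℝ) < n := by exact_mod_cast hn
  have hπ := Real.pi_pos
  have mem : ∀ u : Fin n, π * u / n ∈ Set.Icc 0 π := by
    intro u
    constructor
    · positivity
    · rw [div_le_iff₀ hn']
      have : ((u:ℕ):ℝ) ≤ n := by
        have := u.isLt
        exact_mod_cast this.le
      nlinarith
  have := Real.injOn_cos (mem r) (mem s) hc
  field_simp at this
  exact Fin.ext (by norm_cast at this)

-- uniqueness of the average mixing matrix
lemma mixing_unique {n m p : ℕ} (L : Matrix (Fin n) (Fin n) ℝ)
    (μ : Fin m → ℝ) (F : Fin m → Matrix (Fin n) (Fin n) ℝ)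
    (ν : Fin p → ℝ) (E : Fin p → Matrix (Fin n) (Fin n) ℝ)
    (hμ : Function.Injective μ) (hν : Function.Injective ν)
    (hFsym : ∀ r, (F r)ᵀ = F r) (hEsym : ∀ s, (E s)ᵀ = E s)
    (hForth : ∀ r r', r ≠ r' → F r * F r' = 0)
    (hEorth : ∀ s s', s ≠ s' → E s * E s' = 0)
    (hFidem : ∀ r, F r * F r = F r) (hEidem : ∀ s, E s * E s = E s)
    (hFsum : ∑ r, F r = 1) (hEsum : ∑ s, E s = 1)
    (hFdec : L = ∑ r, μ r • F r) (hEdec : L = ∑ s, ν s • E s) :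
    ∑ r, (F r ⊙ F r) = ∑ s, (E s ⊙ E s) := by
  -- L acts on each idempotent by its eigenvalue
  have hFL : ∀ r, F r * L = μ r • F r := by
    intro r
    rw [hFdec, Finset.mul_sum]
    rw [Finset.sum_eq_single r
      (fun b _ hb => by rw [Matrix.mul_smul, hForth r b (Ne.symm hb), smul_zero])
      (fun h => absurd (Finset.mem_univ r) h)]
    rw [Matrix.mul_smul, hFidem]
  have hLE : ∀ s, L * E s = ν s • E s := by
    intro s
    rw [hEdec, Finset.sum_mul]
    rw [Finset.sum_eq_single s
      (fun b _ hb => by rw [Matrix.smul_mul, hEorth b s hb, smul_zero])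
      (fun h => absurd (Finset.mem_univ s) h)]
    rw [Matrix.smul_mul, hEidem]
  have key : ∀ r s, μ r ≠ ν s → F r * E s = 0 := by
    intro r s hne
    have h1 : μ r • (F r * E s) = ν s • (F r * E s) := by
      calc μ r • (F r * E s) = (μ r • F r) * E s := by rw [Matrix.smul_mul]
        _ = (F r * L) * E s := by rw [hFL]
        _ = F r * (L * E s) := by rw [Matrix.mul_assoc]
        _ = F r * (ν s • E s) := by rw [hLE]
        _ = ν s • (F r * E s) := by rw [Matrix.mul_smul]
    have h2 : (μ r - ν s) • (F r * E s) = 0 := by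
      rw [sub_smul, h1, sub_self]
    rcases smul_eq_zero.mp h2 with h3 | h3
    · exact absurd (sub_eq_zero.mp h3) hne
    · exact h3
  have hFr : ∀ r s, μ r = ν s → F r = F r * E s := by
    intro r s he
    conv_lhs => rw [← Matrix.mul_one (F r), ← hEsum]
    rw [Finset.mul_sum]
    rw [Finset.sum_eq_single s
      (fun b _ hb => key r b (fun hc => hb (hν (he.symm.trans hc)).symm))
      (fun h => absurd (Finset.mem_univ s) h)]
  have hEs : ∀ r s, μ r = ν s → E s = F r * E s := by
    intro r s he
    conv_lhs => rw [← Matrix.one_mul (E s), ← hFsum]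
    rw [Finset.sum_mul]
    rw [Finset.sum_eq_single r
      (fun b _ hb => key b s (fun hc => hb (hμ (hc.trans he.symm))))
      (fun h => absurd (Finset.mem_univ r) h)]
  have hFE : ∀ r s, μ r = ν s → F r = E s := by
    intro r s he
    rw [hFr r s he, ← hEs r s he]
  have hF0 : ∀ r, (∀ s, μ r ≠ ν s) → F r = 0 := by
    intro r h
    have : F r = F r * 1 := (Matrix.mul_one _).symm
    rw [this, ← hEsum, Finset.mul_sum]
    exact Finset.sum_eq_zero (fun s _ => key r s (h s))
  have hE0 : ∀ s, (∀ r, μ r ≠ ν s) → E s = 0 := by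
    intro s h
    have : E s = 1 * E s := (Matrix.one_mul _).symm
    rw [this, ← hFsum, Finset.sum_mul]
    exact Finset.sum_eq_zero (fun r _ => key r s (h r))
  -- now the double sum trick
  have lhs_eq : ∑ r, (F r ⊙ F r)
      = ∑ r, ∑ s, (if μ r = ν s then E s ⊙ E s else 0) := by
    refine Finset.sum_congr rfl (fun r _ => ?_)
    by_cases hex : ∃ s, μ r = ν s
    · obtain ⟨s, hs⟩ := hex
      rw [Finset.sum_eq_single s
        (fun b _ hb => if_neg (fun hc => hb (hν (hs.symm.trans hc)).symm))
        (fun h => absurd (Finset.mem_univ s) h)]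
      rw [if_pos hs, hFE r s hs]
    · push_neg at hex
      rw [hF0 r hex]
      rw [Finset.sum_eq_zero (fun s _ => if_neg (hex s))]
      ext j k
      simp [Matrix.hadamard_apply]
  have rhs_eq : ∑ s, (E s ⊙ E s)
      = ∑ s, ∑ r, (if μ r = ν s then E s ⊙ E s else 0) := by
    refine Finset.sum_congr rfl (fun s _ => ?_)
    by_cases hex : ∃ r, μ r = ν s
    · obtain ⟨r, hr⟩ := hex
      rw [Finset.sum_eq_single r
        (fun b _ hb => if_neg (fun hc => hb (hμ (hc.trans hr.symm))))
        (fun h => absurd (Finset.mem_univ r) h)]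
      rw [if_pos hr]
    · push_neg at hex
      rw [hE0 s hex]
      rw [Finset.sum_eq_zero (fun r _ => if_neg (hex r))]
      ext j k
      simp [Matrix.hadamard_apply]
  rw [lhs_eq, rhs_eq, Finset.sum_comm]


lemma Em_decomp (n : ℕ) (hn : 0 < n) (L : Matrix (Fin n) (Fin n) ℝ)
    (hL : ∀ j k, L j k =
      (if j = k then ((if 0 < j.val then (1 : ℝ) else 0) + (if j.val + 1 < n then 1 else 0))
        else 0) - (if j.val + 1 = k.val ∨ k.val + 1 = j.val then 1 else 0)) :
    L = ∑ r : Fin n, (2 - 2*Real.cos (π * r / n)) • Em n r := by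
  calc L = L * 1 := (Matrix.mul_one L).symm
    _ = L * ∑ r : Fin n, Em n r := by rw [Em_sum n hn (fun m => Dsum n hn m)]
    _ = ∑ r : Fin n, L * Em n r := by rw [Finset.mul_sum]
    _ = ∑ r : Fin n, (2 - 2*Real.cos (π * r / n)) • Em n r :=
        Finset.sum_congr rfl (fun r _ => L_mul_Em n hn L hL r)

open Matrix in
/-- The average mixing matrix of the continuous quantum walk generated by the Laplacian
of the path `P_n` equals `(1/n²) ((n-1) J + (n/2)(I + T))`, where `T` swaps `j` with
`n+1-j`.  The average mixing matrix is the sum of the entrywise squares of the spectral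
idempotents of the Laplacian.  (Vertices are indexed `0, …, n-1`, standing for
`1, …, n`.) -/
theorem laplacian_average_mixing_path
    (n m : ℕ) (hn : 0 < n) (L : Matrix (Fin n) (Fin n) ℝ)
    (hL : ∀ j k, L j k =
      (if j = k then ((if 0 < j.val then (1 : ℝ) else 0) + (if j.val + 1 < n then 1 else 0))
        else 0) - (if j.val + 1 = k.val ∨ k.val + 1 = j.val then 1 else 0))
    (μ : Fin m → ℝ) (F : Fin m → Matrix (Fin n) (Fin n) ℝ)
    (hμ : Function.Injective μ)
    (hsym : ∀ r, (F r)ᵀ = F r)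
    (hidem : ∀ r, F r * F r = F r)
    (horth : ∀ r s, r ≠ s → F r * F s = 0)
    (hsum : ∑ r, F r = 1)
    (hdecomp : L = ∑ r, μ r • F r)
    (J T : Matrix (Fin n) (Fin n) ℝ)
    (hJ : ∀ j k, J j k = 1)
    (hT : ∀ j k, T j k = if j.val + 1 + (k.val + 1) = n + 1 then 1 else 0) :
    ∑ r, (F r ⊙ F r) =
      (1 / (n : ℝ) ^ 2) • (((n : ℝ) - 1) • J + ((n : ℝ) / 2) • (1 + T)) := by
  have huniq := mixing_unique L μ F (fun r : Fin n => 2 - 2*Real.cos (π * r / n)) (Em n)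
    hμ (ev_inj n hn) hsym (Em_sym n)
    horth (fun s s' hss => by rw [Em_mul n hn s s', if_neg hss])
    hidem (fun s => by rw [Em_mul n hn s s, if_pos rfl])
    hsum (Em_sum n hn (fun mm => Dsum n hn mm))
    hdecomp (Em_decomp n hn L hL)
  rw [huniq]
  ext j k
  rw [Em_mix n hn j k]
  simp only [Matrix.smul_apply, Matrix.add_apply, Matrix.one_apply, hJ, hT, smul_eq_mul]
  have hcond : ((j:ℕ) + 1 + ((k:ℕ) + 1) = n + 1) ↔ ((j:ℕ)+(k:ℕ)+1 = n) := by omega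
  simp only [hcond]
  ring
end

section
/- For odd n, the average mixing matrix of the cycle C_n equals ((n-1)/n²)·J + (1/n)·I; for even n it equals ((n-2)/n²)·J + (1/n)·(I + P^{n/2}), where P is the cyclic shift permutation matrix. -/
open Matrix Finset

section Aux

lemma rootSum (n : ℕ) (hn : 0 < n) (ζ : ℂ) (hζ : IsPrimitiveRoot ζ n) (a : ℤ) :
    ∑ j : Fin n, ζ ^ (a * (j : ℤ)) = if (n : ℤ) ∣ a then (n : ℂ) else 0 := by
  have hζ0 : ζ ≠ 0 := hζ.ne_zero hn.ne'
  split_ifs with h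
  · have : ∀ j : Fin n, ζ ^ (a * (j : ℤ)) = 1 := by
      intro j
      rw [hζ.zpow_eq_one_iff_dvd]
      exact Dvd.dvd.mul_right h _
    simp [this]
  · have hx : ζ ^ a ≠ 1 := fun hh => h ((hζ.zpow_eq_one_iff_dvd a).mp hh)
    have key : ∀ j : ℕ, ζ ^ (a * (j : ℤ)) = (ζ ^ a) ^ j := by
      intro j
      rw [← zpow_natCast (ζ ^ a) j, ← _root_.zpow_mul]
    have : ∑ j : Fin n, ζ ^ (a * (j : ℤ)) = ∑ j ∈ Finset.range n, (ζ ^ a) ^ j := by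
      rw [← Fin.sum_univ_eq_sum_range (fun j => (ζ ^ a) ^ j) n]
      exact Finset.sum_congr rfl fun j _ => key j
    rw [this, geom_sum_eq hx]
    have h1 : (ζ ^ a) ^ n = 1 := by
      rw [← key n, mul_comm, _root_.zpow_mul, zpow_natCast, hζ.pow_eq_one, _root_.one_zpow]
    simp [h1]

lemma finZ_add (n : ℕ) [NeZero n] (j k : Fin n) :
    (((j + k : Fin n) : ℤ)) ≡ (j : ℤ) + (k : ℤ) [ZMOD n] := by
  have h : ((j + k : Fin n) : ℕ) = (j.val + k.val) % n := by
    rw [Fin.add_def]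
  unfold Int.ModEq
  rw [h]
  push_cast
  rw [Int.emod_emod_of_dvd _ dvd_rfl]

lemma finZ_sub (n : ℕ) [NeZero n] (j k : Fin n) :
    (((j - k : Fin n) : ℤ)) ≡ (j : ℤ) - (k : ℤ) [ZMOD n] := by
  have h : ((j - k : Fin n) : ℕ) = (n - k.val + j.val) % n := by
    rw [Fin.sub_def]
  have hk : (k : ℕ) ≤ n := k.isLt.le
  unfold Int.ModEq
  rw [h]
  push_cast [hk]
  have e1 : ((n : ℤ) - k + j) = ((j : ℤ) - k) + n * 1 := by ring
  rw [Int.emod_emod_of_dvd _ dvd_rfl, e1, Int.add_mul_emod_self_left]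

lemma finZ_dvd_iff (n : ℕ) [NeZero n] (j k : Fin n) :
    (n : ℤ) ∣ (j : ℤ) - (k : ℤ) ↔ j = k := by
  constructor
  · intro h
    have hj := j.isLt
    have hk := k.isLt
    have h0 : (j : ℤ) - (k : ℤ) = 0 := by
      refine Int.eq_zero_of_abs_lt_dvd h ?_
      rw [abs_lt]
      omega
    have : (j : ℕ) = (k : ℕ) := by omega
    exact Fin.ext this
  · rintro rfl; simp

lemma finZ_eq_iff (n : ℕ) [NeZero n] (j k : Fin n) :
    j = k ↔ (j : ℤ) ≡ (k : ℤ) [ZMOD n] := by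
  rw [Int.modEq_iff_dvd, finZ_dvd_iff]
  exact eq_comm

lemma finZ_neg (n : ℕ) [NeZero n] (s : Fin n) :
    ((-s : Fin n) : ℤ) ≡ -(s : ℤ) [ZMOD n] := by
  have := finZ_sub n 0 s
  simpa using this

lemma finZ_negadd_iff (n : ℕ) [NeZero n] (s t : Fin n) :
    (n : ℤ) ∣ (s : ℤ) + (t : ℤ) ↔ t = -s := by
  rw [finZ_eq_iff n t (-s)]
  constructor
  · intro h
    have h2 : (t : ℤ) ≡ -(s : ℤ) [ZMOD n] := by
      have e : -(s : ℤ) - (t : ℤ) = -((s : ℤ) + t) := by ring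
      rw [Int.modEq_iff_dvd, e]
      exact dvd_neg.mpr h
    exact h2.trans (finZ_neg n s).symm
  · intro h
    have h2 : (t : ℤ) ≡ -(s : ℤ) [ZMOD n] := h.trans (finZ_neg n s)
    have := h2.symm.dvd
    have e : (t : ℤ) - -(s : ℤ) = (s : ℤ) + t := by ring
    rwa [e] at this

end Aux

open Matrix in
/-- For odd `n` the average mixing matrix of the cycle `C_n` equals
`((n-1)/n²) J + (1/n) I`; for even `n` it equals `((n-2)/n²) J + (1/n)(I + P^{n/2})`,
where `P` is the cyclic shift permutation matrix (so `P^{n/2}` is the matrix of the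
shift by `n/2`).  Vertices are `Fin n` with addition modulo `n`. -/
theorem average_mixing_cycle
    (n m : ℕ) [NeZero n] (hn : 3 ≤ n)
    (A : Matrix (Fin n) (Fin n) ℝ)
    (hA : ∀ j k, A j k = if j = k + 1 ∨ k = j + 1 then 1 else 0)
    (θ : Fin m → ℝ) (E : Fin m → Matrix (Fin n) (Fin n) ℝ)
    (hθ : Function.Injective θ)
    (hsym : ∀ r, (E r)ᵀ = E r)
    (hidem : ∀ r, E r * E r = E r)
    (horth : ∀ r s, r ≠ s → E r * E s = 0)
    (hsum : ∑ r, E r = 1)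
    (hdecomp : A = ∑ r, θ r • E r)
    (J P2 : Matrix (Fin n) (Fin n) ℝ)
    (hJ : ∀ j k, J j k = 1)
    (hP2 : ∀ j k, P2 j k = if j = k + Fin.ofNat n (n / 2 : ℕ) then 1 else 0) :
    (Odd n → ∑ r, (E r ⊙ E r) =
        (((n : ℝ) - 1) / (n : ℝ) ^ 2) • J + ((n : ℝ))⁻¹ • (1 : Matrix (Fin n) (Fin n) ℝ)) ∧
    (Even n → ∑ r, (E r ⊙ E r) =
        (((n : ℝ) - 2) / (n : ℝ) ^ 2) • J +
          ((n : ℝ))⁻¹ • ((1 : Matrix (Fin n) (Fin n) ℝ) + P2)) := by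
  have hn0 : 0 < n := by omega
  have hnC : (n : ℂ) ≠ 0 := Nat.cast_ne_zero.mpr hn0.ne'
  set ζ : ℂ := Complex.exp (2 * Real.pi * Complex.I / n) with hζdef
  have hζ : IsPrimitiveRoot ζ n := Complex.isPrimitiveRoot_exp n hn0.ne'
  have hζ0 : ζ ≠ 0 := hζ.ne_zero hn0.ne'
  set e : ℤ → ℂ := fun a => ζ ^ a with hedef
  have he_add : ∀ a b : ℤ, e (a + b) = e a * e b := fun a b => zpow_add₀ hζ0 a b
  have he_one : ∀ a : ℤ, e a = 1 ↔ (n : ℤ) ∣ a := fun a => hζ.zpow_eq_one_iff_dvd a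
  have he_ne : ∀ a : ℤ, e a ≠ 0 := fun a => zpow_ne_zero a hζ0
  have he_congr : ∀ a b : ℤ, a ≡ b [ZMOD n] → e a = e b := by
    intro a b hab
    have h2 : e (a - b) = 1 := (he_one _).mpr hab.symm.dvd
    have h3 : a = b + (a - b) := by ring
    rw [h3, he_add, h2, mul_one]
  have he_sum : ∀ a : ℤ, ∑ j : Fin n, e (a * (j : ℤ)) = if (n : ℤ) ∣ a then (n : ℂ) else 0 :=
    fun a => rootSum n hn0 ζ hζ a
  -- the Fourier matrices
  set G : Fin n → Matrix (Fin n) (Fin n) ℂ :=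
    fun s => Matrix.of (fun j k => e ((s : ℤ) * (j : ℤ)) * e (-((s : ℤ) * (k : ℤ))) / n)
    with hGdef
  have hGapp : ∀ s j k, G s j k = e ((s : ℤ) * (j : ℤ)) * e (-((s : ℤ) * (k : ℤ))) / n :=
    fun s j k => rfl
  set lam : Fin n → ℂ := fun s => e (s : ℤ) + e (-(s : ℤ)) with hlamdef
  -- complexified projections
  set N : Fin m → Matrix (Fin n) (Fin n) ℂ := fun r => (E r).map Complex.ofRealHom with hNdef
  have hNapp : ∀ r j k, N r j k = ((E r j k : ℝ) : ℂ) := fun r j k => rfl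
  set AC : Matrix (Fin n) (Fin n) ℂ := A.map Complex.ofRealHom with hACdef
  have hNidem : ∀ r, N r * N r = N r := by
    intro r; rw [hNdef]; simp only [← Matrix.map_mul, hidem]
  have hNorth : ∀ r s, r ≠ s → N r * N s = 0 := by
    intro r s hrs; rw [hNdef]; simp only [← Matrix.map_mul, horth r s hrs]
    exact Matrix.map_zero _ (map_zero _)
  have hNsum : ∑ r, N r = 1 := by
    ext j k
    rw [Matrix.sum_apply]
    simp only [hNapp]
    rw [← Complex.ofReal_sum]
    have : ∑ r, E r j k = (1 : Matrix (Fin n) (Fin n) ℝ) j k := by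
      rw [← Matrix.sum_apply]; rw [hsum]
    rw [this]
    by_cases hjk : j = k <;> simp [Matrix.one_apply, hjk]
  have hACdecomp : AC = ∑ r, ((θ r : ℝ) : ℂ) • N r := by
    ext j k
    rw [hACdef, Matrix.map_apply, Matrix.sum_apply]
    simp only [Matrix.smul_apply, hNapp, smul_eq_mul]
    rw [hdecomp, Matrix.sum_apply]
    simp only [Complex.ofRealHom_eq_coe, Matrix.smul_apply, smul_eq_mul]
    push_cast
    rfl
  have hone : ((1 : Fin n) : ℕ) = 1 := by
    rw [Fin.val_one']; exact Nat.mod_eq_of_lt (by omega)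
  have honeZ : (((1 : Fin n) : ℕ) : ℤ) = 1 := by rw [hone]; norm_num
  have hGsum : ∑ s, G s = 1 := by
    ext j k
    rw [Matrix.sum_apply]
    have h1 : ∀ s : Fin n, G s j k = e (((j : ℤ) - (k : ℤ)) * (s : ℤ)) / n := by
      intro s
      rw [hGapp, ← he_add]
      have h2 : (s : ℤ) * (j : ℤ) + -((s : ℤ) * (k : ℤ)) = ((j : ℤ) - (k : ℤ)) * (s : ℤ) := by
        ring
      rw [h2]
    rw [Finset.sum_congr rfl (fun s _ => h1 s), ← Finset.sum_div, he_sum]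
    simp only [finZ_dvd_iff]
    by_cases hjk : j = k <;> simp [Matrix.one_apply, hjk, div_self hnC]
  have hAG : ∀ s, AC * G s = lam s • G s := by
    intro s
    ext j k
    rw [Matrix.mul_apply]
    have hterm : ∀ l, AC j l * G s l k = if j = l + 1 ∨ l = j + 1 then G s l k else 0 := by
      intro l
      rw [hACdef, Matrix.map_apply, hA]
      by_cases h : j = l + 1 ∨ l = j + 1 <;> simp [h]
    rw [Finset.sum_congr rfl (fun l _ => hterm l), ← Finset.sum_filter]
    have hfilter : Finset.univ.filter (fun l => j = l + 1 ∨ l = j + 1) = {j - 1, j + 1} := by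
      ext l
      simp only [Finset.mem_filter, Finset.mem_univ, true_and, Finset.mem_insert,
        Finset.mem_singleton]
      constructor
      · rintro (h | h)
        · left; rw [h, add_sub_cancel_right]
        · right; exact h
      · rintro (h | h)
        · left; rw [h, sub_add_cancel]
        · right; exact h
    have hne : j - 1 ≠ j + 1 := by
      intro h
      have h1 := finZ_sub n j 1
      have h2 := finZ_add n j 1
      rw [honeZ] at h1 h2
      rw [h] at h1
      have h3 : ((j : ℤ) - 1) ≡ ((j : ℤ) + 1) [ZMOD n] := h1.symm.trans h2
      have h4 := h3.dvd
      have h5 : ((j : ℤ) + 1) - ((j : ℤ) - 1) = 2 := by ring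
      rw [h5] at h4
      have := Int.le_of_dvd (by norm_num) h4
      omega
    rw [hfilter, Finset.sum_pair hne]
    have hesub : e ((s : ℤ) * ((j - 1 : Fin n) : ℤ)) = e ((s : ℤ) * (j : ℤ)) * e (-(s : ℤ)) := by
      rw [← he_add]
      apply he_congr
      have h1 := (finZ_sub n j 1)
      rw [honeZ] at h1
      have h2 : (s : ℤ) * ((j - 1 : Fin n) : ℤ) ≡ (s : ℤ) * ((j : ℤ) - 1) [ZMOD n] :=
        h1.mul_left (s : ℤ)
      have h3 : (s : ℤ) * ((j : ℤ) - 1) = (s : ℤ) * (j : ℤ) + -(s : ℤ) := by ring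
      rw [h3] at h2
      exact h2
    have headd : e ((s : ℤ) * ((j + 1 : Fin n) : ℤ)) = e ((s : ℤ) * (j : ℤ)) * e ((s : ℤ)) := by
      rw [← he_add]
      apply he_congr
      have h1 := (finZ_add n j 1)
      rw [honeZ] at h1
      have h2 : (s : ℤ) * ((j + 1 : Fin n) : ℤ) ≡ (s : ℤ) * ((j : ℤ) + 1) [ZMOD n] :=
        h1.mul_left (s : ℤ)
      have h3 : (s : ℤ) * ((j : ℤ) + 1) = (s : ℤ) * (j : ℤ) + (s : ℤ) := by ring
      rw [h3] at h2
      exact h2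
    rw [Matrix.smul_apply, hGapp, hGapp, hGapp, hesub, headd, hlamdef]
    simp only [smul_eq_mul]
    ring
  have he0 : e 0 = 1 := (he_one 0).mpr (dvd_zero _)
  have hNA2 : ∀ r, N r * AC = ((θ r : ℝ) : ℂ) • N r := by
    intro r
    rw [hACdecomp, Matrix.mul_sum]
    rw [Finset.sum_eq_single r]
    · rw [Matrix.mul_smul, hNidem]
    · intro s _ hs
      rw [Matrix.mul_smul, hNorth r s (Ne.symm hs), smul_zero]
    · intro h; exact absurd (Finset.mem_univ r) h
  have hkey : ∀ r s, ((θ r : ℝ) : ℂ) ≠ lam s → N r * G s = 0 := by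
    intro r s hne2
    have h1 : N r * (AC * G s) = lam s • (N r * G s) := by
      rw [hAG s, Matrix.mul_smul]
    have h2 : N r * (AC * G s) = ((θ r : ℝ) : ℂ) • (N r * G s) := by
      rw [← Matrix.mul_assoc, hNA2, Matrix.smul_mul]
    have h4 : (((θ r : ℝ) : ℂ) - lam s) • (N r * G s) = 0 := by
      rw [sub_smul, ← h1, ← h2, sub_self]
    rcases smul_eq_zero.mp h4 with h | h
    · exact absurd (sub_eq_zero.mp h) hne2
    · exact h
  have hGne : ∀ s, G s ≠ 0 := by
    intro s h
    have h2 : G s 0 0 = 0 := by rw [h]; rfl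
    rw [hGapp] at h2
    simp only [Fin.val_zero, Nat.cast_zero, mul_zero, neg_zero, he0, one_mul,
      div_eq_zero_iff] at h2
    rcases h2 with h2 | h2
    · exact one_ne_zero h2
    · exact hnC h2
  have hex : ∀ s : Fin n, ∃ r, ((θ r : ℝ) : ℂ) = lam s := by
    intro s
    by_contra hcon
    push_neg at hcon
    have h1 : G s = (∑ r, N r) * G s := by rw [hNsum, Matrix.one_mul]
    rw [Matrix.sum_mul] at h1
    rw [Finset.sum_congr rfl (fun r _ => hkey r s (hcon r))] at h1
    simp only [Finset.sum_const, smul_zero] at h1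
    exact hGne s h1
  choose c hc using hex
  have hcuniq : ∀ s r, ((θ r : ℝ) : ℂ) = lam s → r = c s := by
    intro s r h
    apply hθ
    have h2 := h.trans (hc s).symm
    exact_mod_cast h2
  have hNG : ∀ s, N (c s) * G s = G s := by
    intro s
    have h1 : G s = ∑ r, N r * G s := by rw [← Matrix.sum_mul, hNsum, Matrix.one_mul]
    rw [Finset.sum_eq_single (c s)] at h1
    · exact h1.symm
    · intro r _ hr
      exact hkey r s (fun h => hr (hcuniq s r h))
    · intro h; exact absurd (Finset.mem_univ _) h
  have hEr : ∀ r, N r = ∑ s ∈ Finset.univ.filter (fun s => c s = r), G s := by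
    intro r
    have h1 : N r = ∑ s, N r * G s := by rw [← Matrix.mul_sum, hGsum, Matrix.mul_one]
    rw [Finset.sum_filter, h1]
    apply Finset.sum_congr rfl
    intro s _
    by_cases h : c s = r
    · rw [if_pos h, ← h, hNG]
    · rw [if_neg h]
      apply hkey
      intro heq
      exact h (hcuniq s r heq).symm
  have hlam_iff : ∀ s t : Fin n, lam s = lam t ↔ (t = s ∨ t = -s) := by
    intro s t
    have h1 : e (s : ℤ) * e (-(s : ℤ)) = 1 := by rw [← he_add, add_neg_cancel, he0]
    have h2 : e (t : ℤ) * e (-(t : ℤ)) = 1 := by rw [← he_add, add_neg_cancel, he0]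
    have key : e (s : ℤ) * (lam s - lam t) =
        (e (s : ℤ) - e (t : ℤ)) * (e (s : ℤ) - e (-(t : ℤ))) := by
      simp only [hlamdef]
      linear_combination h1 - h2
    constructor
    · intro h
      have h0 : (e (s : ℤ) - e (t : ℤ)) * (e (s : ℤ) - e (-(t : ℤ))) = 0 := by
        rw [← key, h, sub_self, mul_zero]
      rcases mul_eq_zero.mp h0 with h' | h'
      · left
        have h3 : e ((s : ℤ) - (t : ℤ)) = 1 := by
          rw [show (s : ℤ) - (t : ℤ) = (s : ℤ) + -(t : ℤ) by ring, he_add,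
            sub_eq_zero.mp h', h2]
        exact ((finZ_dvd_iff n s t).mp ((he_one _).mp h3)).symm
      · right
        have h3 : e ((s : ℤ) + (t : ℤ)) = 1 := by
          rw [he_add, sub_eq_zero.mp h', ← he_add, neg_add_cancel, he0]
        exact (finZ_negadd_iff n s t).mp ((he_one _).mp h3)
    · intro h
      rcases h with rfl | rfl
      · rfl
      · simp only [hlamdef]
        have h3 : e ((-s : Fin n) : ℤ) = e (-(s : ℤ)) := he_congr _ _ (finZ_neg n s)
        have h4 : e (-((-s : Fin n) : ℤ)) = e ((s : ℤ)) := by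
          apply he_congr
          have h5 := (finZ_neg n s).neg
          simpa using h5
        rw [h3, h4, add_comm]
  set cnt : ℕ := (Finset.univ.filter (fun s : Fin n => -s = s)).card with hcntdef
  have keyEntry : ∀ j k : Fin n,
      (((∑ r, (E r ⊙ E r)) j k : ℝ) : ℂ) =
        (if (n : ℤ) ∣ 2 * ((j : ℤ) - (k : ℤ)) then ((n : ℂ))⁻¹ else 0)
          + ((n : ℂ) - cnt) / (n : ℂ) ^ 2 := by
    intro j k
    have hL : (((∑ r, (E r ⊙ E r)) j k : ℝ) : ℂ) = ∑ r, (N r j k) * (N r j k) := by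
      rw [Matrix.sum_apply]
      push_cast
      apply Finset.sum_congr rfl
      intro r _
      rw [Matrix.hadamard_apply, hNapp]
      push_cast
      rfl
    rw [hL]
    have hNentry : ∀ r, (N r j k) * (N r j k) =
        ∑ s ∈ Finset.univ.filter (fun s => c s = r),
          ∑ t ∈ Finset.univ.filter (fun t => c t = c s), G s j k * G t j k := by
      intro r
      have h1 : N r j k = ∑ s ∈ Finset.univ.filter (fun s => c s = r), G s j k := by
        rw [hEr r, Matrix.sum_apply]
      rw [h1, Finset.sum_mul_sum]
      apply Finset.sum_congr rfl
      intro s hs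
      have h2 : c s = r := (Finset.mem_filter.mp hs).2
      rw [h2]
    rw [Finset.sum_congr rfl (fun r _ => hNentry r)]
    rw [Finset.sum_fiberwise]
    have hfib : ∀ s : Fin n, Finset.univ.filter (fun t => c t = c s) =
        Finset.univ.filter (fun t => t = s ∨ t = -s) := by
      intro s
      apply Finset.filter_congr
      intro t _
      constructor
      · intro h
        have h1 : lam s = lam t := by
          rw [← hc s, ← hc t, h]
        exact (hlam_iff s t).mp h1
      · intro h
        have h1 : lam s = lam t := (hlam_iff s t).mpr h
        have h2 : ((θ (c s) : ℝ) : ℂ) = lam t := (hc s).trans h1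
        exact (hcuniq t (c s) h2).symm
    rw [Finset.sum_congr rfl (fun s _ => by rw [hfib s])]
    have hgg : ∀ s : Fin n, G s j k * G s j k
        = e ((2 * ((j : ℤ) - (k : ℤ))) * (s : ℤ)) / (n : ℂ) ^ 2 := by
      intro s
      rw [hGapp, div_mul_div_comm]
      have harg : e ((s : ℤ) * (j : ℤ)) * e (-((s : ℤ) * (k : ℤ)))
          * (e ((s : ℤ) * (j : ℤ)) * e (-((s : ℤ) * (k : ℤ))))
          = e ((2 * ((j : ℤ) - (k : ℤ))) * (s : ℤ)) := by
        simp only [← he_add]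
        congr 1
        ring
      rw [harg, sq]
    have hgneg : ∀ s : Fin n, G s j k * G (-s) j k = ((n : ℂ) ^ 2)⁻¹ := by
      intro s
      rw [hGapp, hGapp, div_mul_div_comm]
      have hw : (n : ℤ) ∣ ((s : ℤ) + ((-s : Fin n) : ℤ)) := by
        have h1 := Int.ModEq.dvd (finZ_neg n s)
        have h2 : (s : ℤ) + ((-s : Fin n) : ℤ) = -(-(s : ℤ) - ((-s : Fin n) : ℤ)) := by ring
        rw [h2]
        exact dvd_neg.mpr h1
      have harg : e ((s : ℤ) * (j : ℤ)) * e (-((s : ℤ) * (k : ℤ)))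
          * (e (((-s : Fin n) : ℤ) * (j : ℤ)) * e (-(((-s : Fin n) : ℤ) * (k : ℤ)))) = 1 := by
        simp only [← he_add]
        apply (he_one _).mpr
        have h3 : (s : ℤ) * (j : ℤ) + -((s : ℤ) * (k : ℤ))
            + (((-s : Fin n) : ℤ) * (j : ℤ) + -(((-s : Fin n) : ℤ) * (k : ℤ)))
            = ((s : ℤ) + ((-s : Fin n) : ℤ)) * ((j : ℤ) - (k : ℤ)) := by ring
        rw [h3]
        exact hw.mul_right _
      rw [harg, one_div, sq]
    have hinner : ∀ s : Fin n,
        ∑ t ∈ Finset.univ.filter (fun t => t = s ∨ t = -s), G s j k * G t j k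
          = G s j k * G s j k + (if -s = s then 0 else ((n : ℂ) ^ 2)⁻¹) := by
      intro s
      by_cases hs : -s = s
      · have hfs : Finset.univ.filter (fun t => t = s ∨ t = -s) = {s} := by
          ext t
          simp only [Finset.mem_filter, Finset.mem_univ, true_and, Finset.mem_singleton,
            hs, or_self]
        rw [hfs, Finset.sum_singleton, if_pos hs, add_zero]
      · have hfs : Finset.univ.filter (fun t => t = s ∨ t = -s) = {s, -s} := by
          ext t
          simp only [Finset.mem_filter, Finset.mem_univ, true_and, Finset.mem_insert,
            Finset.mem_singleton]
        rw [hfs, Finset.sum_pair (fun h => hs h.symm), if_neg hs, hgneg s]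
    rw [Finset.sum_congr rfl (fun s _ => hinner s), Finset.sum_add_distrib]
    have hsum1 : ∑ s : Fin n, G s j k * G s j k
        = if (n : ℤ) ∣ 2 * ((j : ℤ) - (k : ℤ)) then ((n : ℂ))⁻¹ else 0 := by
      rw [Finset.sum_congr rfl (fun s _ => hgg s), ← Finset.sum_div, he_sum]
      split_ifs
      · rw [sq]
        field_simp
      · exact zero_div _
    have hsum2 : ∑ s : Fin n, (if -s = s then 0 else ((n : ℂ) ^ 2)⁻¹)
        = ((n : ℂ) - cnt) / (n : ℂ) ^ 2 := by
      rw [Finset.sum_ite, Finset.sum_const_zero, zero_add, Finset.sum_const, nsmul_eq_mul]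
      have hcard : (Finset.univ.filter (fun s : Fin n => ¬ -s = s)).card = n - cnt := by
        have h1 := Finset.card_filter_add_card_filter_not
          (s := (Finset.univ : Finset (Fin n))) (p := fun s : Fin n => -s = s)
        have h2 : (Finset.univ : Finset (Fin n)).card = n := by
          rw [Finset.card_univ, Fintype.card_fin]
        omega
      have hle : cnt ≤ n := by
        rw [hcntdef]
        calc (Finset.univ.filter (fun s : Fin n => -s = s)).card
            ≤ (Finset.univ : Finset (Fin n)).card := Finset.card_filter_le _ _
        _ = n := by rw [Finset.card_univ, Fintype.card_fin]
      rw [hcard]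
      push_cast [hle]
      ring
    rw [hsum1, hsum2]
  have hneg_iff : ∀ s : Fin n, -s = s ↔ ((s : ℕ) = 0 ∨ 2 * (s : ℕ) = n) := by
    intro s
    have hval : ((-s : Fin n) : ℕ) = (n - (s : ℕ)) % n := by rw [Fin.neg_def]
    constructor
    · intro h
      have h2 : ((-s : Fin n) : ℕ) = (s : ℕ) := by rw [h]
      rw [hval] at h2
      rcases Nat.eq_zero_or_pos (s : ℕ) with h0 | h0
      · left; exact h0
      · right
        have hlt := s.isLt
        rw [Nat.mod_eq_of_lt (by omega)] at h2
        omega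
    · intro h
      apply Fin.ext
      rw [hval]
      have hlt := s.isLt
      rcases h with h | h
      · rw [h]; simp [Nat.mod_self]
      · rw [Nat.mod_eq_of_lt (by omega)]; omega
  have hhalf : ((Fin.ofNat n (n / 2 : ℕ) : Fin n) : ℕ) = n / 2 := by
    rw [Fin.val_ofNat]
    exact Nat.mod_eq_of_lt (by omega)
  have hcnt_odd : Odd n → cnt = 1 := by
    intro hodd
    rw [hcntdef]
    have hset : Finset.univ.filter (fun s : Fin n => -s = s) = {(0 : Fin n)} := by
      ext s
      simp only [Finset.mem_filter, Finset.mem_univ, true_and, Finset.mem_singleton]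
      rw [hneg_iff]
      constructor
      · rintro (h | h)
        · exact Fin.ext (by simpa using h)
        · exfalso; rcases hodd with ⟨w, hw⟩; omega
      · rintro rfl
        left; simp
    rw [hset, Finset.card_singleton]
  have hcnt_even : Even n → cnt = 2 := by
    intro heven
    obtain ⟨w, hw⟩ := heven
    rw [hcntdef]
    have hset : Finset.univ.filter (fun s : Fin n => -s = s)
        = {(0 : Fin n), Fin.ofNat n (n / 2 : ℕ)} := by
      ext s
      simp only [Finset.mem_filter, Finset.mem_univ, true_and, Finset.mem_insert,
        Finset.mem_singleton]
      rw [hneg_iff]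
      constructor
      · rintro (h | h)
        · left; exact Fin.ext (by simpa using h)
        · right; apply Fin.ext; rw [hhalf]; omega
      · rintro (rfl | rfl)
        · left; simp
        · right; rw [hhalf]; omega
    rw [hset, Finset.card_insert_of_notMem, Finset.card_singleton]
    simp only [Finset.mem_singleton]
    intro h
    have h2 := congrArg Fin.val h
    rw [hhalf] at h2
    simp only [Fin.val_zero] at h2
    omega
  constructor
  · -- odd case
    intro hodd
    have hcnt1 := hcnt_odd hodd
    ext j k
    have hdvd_iff : (n : ℤ) ∣ 2 * ((j : ℤ) - (k : ℤ)) ↔ j = k := by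
      rw [← finZ_dvd_iff n j k]
      constructor
      · intro h
        have h1 : Nat.Coprime n 2 := Nat.coprime_two_right.mpr hodd
        have hcop : IsCoprime (n : ℤ) 2 := by
          rw [Int.isCoprime_iff_gcd_eq_one]
          simpa [Int.gcd] using h1
        exact hcop.dvd_of_dvd_mul_left h
      · intro h; exact Dvd.dvd.mul_left h 2
    have hR : ((((n : ℝ) - 1) / (n : ℝ) ^ 2) • J
          + ((n : ℝ))⁻¹ • (1 : Matrix (Fin n) (Fin n) ℝ)) j k
        = ((n : ℝ) - 1) / (n : ℝ) ^ 2 + (if j = k then ((n : ℝ))⁻¹ else 0) := by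
      rw [Matrix.add_apply, Matrix.smul_apply, Matrix.smul_apply, hJ, Matrix.one_apply]
      simp only [smul_eq_mul, mul_ite, mul_one, mul_zero]
    rw [hR]
    apply Complex.ofReal_injective
    rw [keyEntry j k, hcnt1]
    by_cases hjk : j = k
    · rw [if_pos (hdvd_iff.mpr hjk), if_pos hjk]
      push_cast
      ring
    · rw [if_neg (fun h => hjk (hdvd_iff.mp h)), if_neg hjk]
      push_cast
      ring
  · -- even case
    intro heven
    have hcnt2 := hcnt_even heven
    obtain ⟨w, hw⟩ := heven
    ext j k
    have hvadd : ((k + Fin.ofNat n (n / 2 : ℕ) : Fin n) : ℕ) = ((k : ℕ) + n / 2) % n := by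
      rw [Fin.add_def, hhalf]
    have hdvd_iff : (n : ℤ) ∣ 2 * ((j : ℤ) - (k : ℤ))
        ↔ (j = k ∨ j = k + Fin.ofNat n (n / 2 : ℕ)) := by
      have hj := j.isLt
      have hk := k.isLt
      constructor
      · intro h
        obtain ⟨cc, hcc⟩ := h
        have hn' : (0 : ℤ) < (n : ℤ) := by exact_mod_cast hn0
        have hb1 : (n : ℤ) * cc < (n : ℤ) * 2 := by
          rw [← hcc]
          have : ((j : ℕ) : ℤ) < (n : ℤ) := by exact_mod_cast hj
          have : (0 : ℤ) ≤ ((k : ℕ) : ℤ) := by positivity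
          omega
        have hb2 : (n : ℤ) * (-2) < (n : ℤ) * cc := by
          rw [← hcc]
          have : ((k : ℕ) : ℤ) < (n : ℤ) := by exact_mod_cast hk
          have : (0 : ℤ) ≤ ((j : ℕ) : ℤ) := by positivity
          omega
        have hc1 : cc < 2 := lt_of_mul_lt_mul_left hb1 hn'.le
        have hc2 : -2 < cc := lt_of_mul_lt_mul_left hb2 hn'.le
        have hcases : cc = -1 ∨ cc = 0 ∨ cc = 1 := by omega
        have hnq : (n : ℤ) = 2 * ((n / 2 : ℕ) : ℤ) := by
          have : n = 2 * (n / 2) := by omega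
          exact_mod_cast this
        rcases hcases with rfl | rfl | rfl
        · right
          apply Fin.ext
          rw [hvadd]
          have hge : ¬ ((k : ℕ) + n / 2 < n) := by omega
          rw [Nat.mod_eq_sub_mod (by omega), Nat.mod_eq_of_lt (by omega)]
          omega
        · left
          apply Fin.ext
          omega
        · right
          apply Fin.ext
          rw [hvadd]
          rw [Nat.mod_eq_of_lt (by omega)]
          omega
      · intro h
        rcases h with rfl | rfl
        · simp
        · by_cases hlt : (k : ℕ) + n / 2 < n
          · have hX : ((k + Fin.ofNat n (n / 2 : ℕ) : Fin n) : ℕ) = (k : ℕ) + n / 2 := by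
              rw [hvadd, Nat.mod_eq_of_lt hlt]
            refine ⟨1, ?_⟩
            omega
          · have hX : ((k + Fin.ofNat n (n / 2 : ℕ) : Fin n) : ℕ) = (k : ℕ) + n / 2 - n := by
              rw [hvadd, Nat.mod_eq_sub_mod (by omega), Nat.mod_eq_of_lt (by omega)]
            refine ⟨-1, ?_⟩
            omega
    have hR : ((((n : ℝ) - 2) / (n : ℝ) ^ 2) • J
          + ((n : ℝ))⁻¹ • ((1 : Matrix (Fin n) (Fin n) ℝ) + P2)) j k
        = ((n : ℝ) - 2) / (n : ℝ) ^ 2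
          + ((if j = k then ((n : ℝ))⁻¹ else 0)
            + (if j = k + Fin.ofNat n (n / 2 : ℕ) then ((n : ℝ))⁻¹ else 0)) := by
      rw [Matrix.add_apply, Matrix.smul_apply, Matrix.smul_apply, hJ, Matrix.add_apply,
        Matrix.one_apply, hP2]
      simp only [smul_eq_mul, mul_ite, mul_one, mul_zero, mul_add]
    rw [hR]
    apply Complex.ofReal_injective
    rw [keyEntry j k, hcnt2]
    have hhalf_ne : ¬ (k = k + Fin.ofNat n (n / 2 : ℕ)) := by
      intro h
      have h2 := congrArg Fin.val h
      rw [hvadd] at h2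
      by_cases hlt : (k : ℕ) + n / 2 < n
      · rw [Nat.mod_eq_of_lt hlt] at h2; omega
      · rw [Nat.mod_eq_sub_mod (by omega), Nat.mod_eq_of_lt (by omega)] at h2
        have := k.isLt
        omega
    by_cases h1 : j = k
    · have h2 : ¬ (j = k + Fin.ofNat n (n / 2 : ℕ)) := by rw [h1]; exact hhalf_ne
      rw [if_pos (hdvd_iff.mpr (Or.inl h1)), if_pos h1, if_neg h2]
      push_cast
      ring
    · by_cases h2 : j = k + Fin.ofNat n (n / 2 : ℕ)
      · rw [if_pos (hdvd_iff.mpr (Or.inr h2)), if_neg h1, if_pos h2]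
        push_cast
        ring
      · rw [if_neg (fun h => by rcases hdvd_iff.mp h with h' | h' <;> [exact h1 h'; exact h2 h']),
          if_neg h1, if_neg h2]
        push_cast
        ring
end

section
/- If X is a graph belonging to a symmetric pseudocyclic association scheme with d classes on n vertices, each nontrivial class having valency m = (n-1)/d, then the average mixing matrix of X is ((n-m+1)/n²)·J + ((m-1)/n)·I. (Equivalently: starting from Koppinen's identity Σ_i (1/(n·v_i))·A_i = Σ_j (1/m_j)·E_j ∘ E_j with v_0 = m_0 = 1 and v_i = m_i = m for i ≥ 1, and using Σ_i A_i = J, Σ_j E_j = I, one gets Σ_{j=1}^d E_j ∘ E_j = ((n-m)/n²)·J + ((m-1)/n)·I, hence M̂ = E_0∘E_0 + Σ_{j≥1} E_j∘E_j with E_0 = J/n gives the stated formula.) -/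
open Matrix in
/-- If `X` is a graph belonging to a symmetric pseudocyclic association scheme with `d`
classes on `n` vertices, each nontrivial class of valency `m = (n-1)/d`, then the
average mixing matrix of `X` is `((n-m+1)/n²) J + ((m-1)/n) I`.  Here the scheme is given
by Schur idempotents `A_i`, matrix idempotents `E_j`, valencies `v_i` and multiplicities
`m_j`, and Koppinen's identity is assumed. -/
theorem average_mixing_pseudocyclic
    (n d : ℕ) (hn : 0 < n) (hd : 0 < d)
    (A E : Fin (d + 1) → Matrix (Fin n) (Fin n) ℝ)
    (v μ : Fin (d + 1) → ℝ)
    (J : Matrix (Fin n) (Fin n) ℝ) (hJ : ∀ j k, J j k = 1)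
    (hA0 : A 0 = 1) (hsumA : ∑ i, A i = J)
    (hE0 : E 0 = ((n : ℝ))⁻¹ • J) (hsumE : ∑ j, E j = 1)
    (hEsym : ∀ j, (E j)ᵀ = E j) (hEidem : ∀ j, E j * E j = E j)
    (hEorth : ∀ j j', j ≠ j' → E j * E j' = 0)
    (hv0 : v 0 = 1) (hμ0 : μ 0 = 1)
    (hvi : ∀ i, i ≠ 0 → v i = ((n : ℝ) - 1) / d)
    (hμi : ∀ i, i ≠ 0 → μ i = ((n : ℝ) - 1) / d)
    (koppinen : ∑ i, (1 / ((n : ℝ) * v i)) • A i = ∑ j, (1 / μ j) • (E j ⊙ E j)) :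
    ∑ j, (E j ⊙ E j) =
      (((n : ℝ) - ((n : ℝ) - 1) / d + 1) / (n : ℝ) ^ 2) • J +
        ((((n : ℝ) - 1) / d - 1) / (n : ℝ)) • (1 : Matrix (Fin n) (Fin n) ℝ) := by

  rcases Nat.lt_or_ge n 2 with h1 | h2
  · -- n = 1
    interval_cases n
    have hJ1 : J = 1 := by
      ext i k
      have hik : i = k := Subsingleton.elim i k
      simp [hJ, hik, Matrix.one_apply]
    have hE0' : E 0 = 1 := by
      rw [hE0, hJ1]; norm_num
    have hEz : ∀ j : Fin d, E j.succ = 0 := by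
      intro j
      have h := hEorth 0 j.succ (Fin.succ_ne_zero j).symm
      rwa [hE0', one_mul] at h
    rw [Fin.sum_univ_succ]
    have hz : ∀ j : Fin d, E j.succ ⊙ E j.succ = 0 := fun j => by
      rw [hEz j, Matrix.hadamard_zero]
    simp only [hz, Finset.sum_const_zero, add_zero, hE0', hJ1]
    ext i k
    have hik : i = k := Subsingleton.elim i k
    simp [Matrix.hadamard, Matrix.one_apply, hik]
  · -- n ≥ 2
    have hn0 : (n : ℝ) ≠ 0 := by
      have : (0:ℝ) < n := by exact_mod_cast hn
      linarith
    have hd0 : (0:ℝ) < d := by exact_mod_cast hd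
    set m : ℝ := ((n : ℝ) - 1) / d with hmdef
    have hm0 : m ≠ 0 := by
      have h2' : (2:ℝ) ≤ n := by exact_mod_cast h2
      have : (0:ℝ) < m := by
        apply div_pos <;> linarith
      linarith
    have hAd : ∑ i : Fin d, A i.succ = J - 1 := by
      have h := hsumA
      rw [Fin.sum_univ_succ, hA0] at h
      exact eq_sub_of_add_eq' h
    have hJJ : J ⊙ J = J := by
      ext i k; simp [Matrix.hadamard, hJ]
    have hE00 : E 0 ⊙ E 0 = ((n : ℝ) ^ 2)⁻¹ • J := by
      rw [hE0, Matrix.smul_hadamard, Matrix.hadamard_smul, hJJ, smul_smul]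
      congr 1
      rw [sq, mul_inv]
    have h1 := koppinen
    rw [Fin.sum_univ_succ, Fin.sum_univ_succ, hv0, hμ0, hA0] at h1
    have hv' : ∀ i : Fin d, (1 / ((n:ℝ) * v i.succ)) • A i.succ
        = (1 / ((n:ℝ) * m)) • A i.succ := fun i => by
      rw [hvi _ (Fin.succ_ne_zero i)]
    have hμ' : ∀ j : Fin d, (1 / μ j.succ) • (E j.succ ⊙ E j.succ)
        = (1 / m) • (E j.succ ⊙ E j.succ) := fun j => by
      rw [hμi _ (Fin.succ_ne_zero j)]
    simp only [hv', hμ', mul_one, one_div_one, one_smul] at h1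
    rw [← Finset.smul_sum, ← Finset.smul_sum, hAd, hE00] at h1
    set S := ∑ j : Fin d, (E j.succ ⊙ E j.succ) with hS
    have h2' : (1 / m) • S
        = (1 / (n:ℝ)) • (1 : Matrix (Fin n) (Fin n) ℝ)
          + (1 / ((n:ℝ) * m)) • (J - 1) - ((n:ℝ) ^ 2)⁻¹ • J := by
      exact eq_sub_of_add_eq' h1.symm
    have hSval : S = m • ((1 / (n:ℝ)) • (1 : Matrix (Fin n) (Fin n) ℝ)
          + (1 / ((n:ℝ) * m)) • (J - 1) - ((n:ℝ) ^ 2)⁻¹ • J) := by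
      rw [← h2', smul_smul, mul_one_div, div_self hm0, one_smul]
    rw [Fin.sum_univ_succ, hE00, ← hS, hSval]
    ext i k
    by_cases hik : i = k <;>
      simp [Matrix.smul_apply, Matrix.add_apply, Matrix.sub_apply, Matrix.one_apply, hJ, hik] <;>
      field_simp <;> ring
end

section
/- Vertices u and v of a graph X are strongly cospectral (meaning E_r e_u = ±E_r e_v for every spectral idempotent E_r) if and only if M̂(e_u - e_v) = 0, where M̂ is the average mixing matrix. -/
open Matrix in
private lemma sum_mulVec_aux {N : ℕ} {ι : Type*} (s : Finset ι)
    (M : ι → Matrix (Fin N) (Fin N) ℝ) (x : Fin N → ℝ) :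
    (∑ r ∈ s, M r) *ᵥ x = ∑ r ∈ s, (M r) *ᵥ x := by
  funext i
  simp only [Matrix.mulVec, dotProduct, Finset.sum_apply, Finset.sum_mul,
    Matrix.sum_apply]
  rw [Finset.sum_comm]

open Matrix in
private lemma dotProduct_sum_aux {N : ℕ} {ι : Type*} (s : Finset ι)
    (x : Fin N → ℝ) (f : ι → Fin N → ℝ) :
    x ⬝ᵥ (∑ r ∈ s, f r) = ∑ r ∈ s, x ⬝ᵥ f r := by
  simp only [dotProduct, Finset.sum_apply, Finset.mul_sum]
  rw [Finset.sum_comm]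


open Matrix in
/-- Vertices `u` and `v` of a graph `X` are strongly cospectral (meaning
`E_r e_u = ± E_r e_v` for every spectral idempotent `E_r`) if and only if
`M̂ (e_u - e_v) = 0`, where `M̂ = ∑ r, E r ⊙ E r` is the average mixing matrix. -/
theorem strongly_cospectral_iff_average_mixing_ker
    (n m : ℕ) (A : Matrix (Fin n) (Fin n) ℝ)
    (θ : Fin m → ℝ) (E : Fin m → Matrix (Fin n) (Fin n) ℝ)
    (hθ : Function.Injective θ)
    (hsym : ∀ r, (E r)ᵀ = E r)
    (hidem : ∀ r, E r * E r = E r)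
    (horth : ∀ r s, r ≠ s → E r * E s = 0)
    (hsum : ∑ r, E r = 1)
    (hA : A = ∑ r, θ r • E r)
    (u v : Fin n) :
    (∀ r, (E r).mulVec (Pi.single u 1) = (E r).mulVec (Pi.single v 1) ∨
        (E r).mulVec (Pi.single u 1) = -(E r).mulVec (Pi.single v 1)) ↔
      (∑ r, (E r ⊙ E r)).mulVec (Pi.single u 1 - Pi.single v 1) = 0 := by
  classical
  have hsym' : ∀ r (i j : Fin n), E r i j = E r j i := by
    intro r i j
    conv_lhs => rw [← hsym r]
    rfl
  -- Gram identities
  have huu : ∀ r, E r u u = ∑ k, E r k u * E r k u := by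
    intro r
    conv_lhs => rw [← hidem r]
    rw [Matrix.mul_apply]
    exact Finset.sum_congr rfl fun k _ => by rw [hsym' r u k]
  have hvv : ∀ r, E r v v = ∑ k, E r k v * E r k v := by
    intro r
    conv_lhs => rw [← hidem r]
    rw [Matrix.mul_apply]
    exact Finset.sum_congr rfl fun k _ => by rw [hsym' r v k]
  have huv : ∀ r, E r u v = ∑ k, E r k u * E r k v := by
    intro r
    conv_lhs => rw [← hidem r]
    rw [Matrix.mul_apply]
    exact Finset.sum_congr rfl fun k _ => by rw [hsym' r u k]
  constructor
  · intro h
    have hsq : ∀ r (i : Fin n), E r i u * E r i u = E r i v * E r i v := by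
      intro r i
      rcases h r with h' | h'
      · have := congrFun h' i
        simp only [Matrix.mulVec_single_one, Matrix.col_apply, mul_one] at this
        rw [this]
      · have := congrFun h' i
        simp only [Matrix.mulVec_single_one, Matrix.col_apply, Pi.neg_apply, mul_one] at this
        rw [this]; ring
    funext i
    rw [sum_mulVec_aux]
    simp only [Pi.zero_apply, Finset.sum_apply]
    refine Finset.sum_eq_zero fun r _ => ?_
    rw [Matrix.mulVec_sub]
    simp only [Pi.sub_apply, Matrix.mulVec_single_one, Matrix.col_apply, mul_one, Matrix.hadamard_apply]
    rw [hsq r i, sub_self]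
  · intro h
    -- the quadratic form of each hadamard square at (e_u - e_v)
    have key : ∑ r, ((E r u u)^2 - 2 * (E r u v)^2 + (E r v v)^2) = 0 := by
      have h0 : (Pi.single u 1 - Pi.single v 1 : Fin n → ℝ) ⬝ᵥ
          (∑ r, (E r ⊙ E r)).mulVec (Pi.single u 1 - Pi.single v 1) = 0 := by
        rw [h, dotProduct_zero]
      rw [sum_mulVec_aux, dotProduct_sum_aux] at h0
      rw [← h0]
      refine Finset.sum_congr rfl fun r _ => ?_
      rw [Matrix.mulVec_sub]
      simp only [Matrix.mulVec_single_one, Matrix.col_apply, mul_one, sub_dotProduct,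
        dotProduct_sub, single_dotProduct, one_mul, Pi.sub_apply,
        Matrix.hadamard_apply]
      rw [hsym' r v u]
      ring
    have hcs : ∀ r, (E r u v)^2 ≤ E r u u * E r v v := by
      intro r
      have := Finset.sum_mul_sq_le_sq_mul_sq Finset.univ (fun k => E r k u) (fun k => E r k v)
      rw [← huv r] at this
      calc (E r u v)^2 ≤ (∑ k, (E r k u)^2) * ∑ k, (E r k v)^2 := this
        _ = E r u u * E r v v := by rw [huu r, hvv r]; simp only [pow_two]
    have hnn : ∀ r, 0 ≤ (E r u u)^2 - 2 * (E r u v)^2 + (E r v v)^2 := by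
      intro r
      have h1 : (0:ℝ) ≤ (E r u u - E r v v)^2 := sq_nonneg _
      nlinarith [hcs r]
    have hz : ∀ r, (E r u u)^2 - 2 * (E r u v)^2 + (E r v v)^2 = 0 := by
      intro r
      have := (Finset.sum_eq_zero_iff_of_nonneg (fun r _ => hnn r)).mp key
      exact this r (Finset.mem_univ r)
    intro r
    have hcs' := hcs r
    have hz' := hz r
    have heq : E r u u = E r v v := by nlinarith [sq_nonneg (E r u u - E r v v)]
    have hg2 : (E r u v)^2 = (E r u u)^2 := by nlinarith
    have hcase : E r u v = E r u u ∨ E r u v = -(E r u u) := by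
      have : (E r u v - E r u u) * (E r u v + E r u u) = 0 := by nlinarith
      rcases mul_eq_zero.mp this with h' | h'
      · left; linarith
      · right; linarith
    rcases hcase with hc | hc
    · left
      funext i
      simp only [Matrix.mulVec_single_one, Matrix.col_apply, mul_one]
      have hsumz : ∑ k, (E r k u - E r k v)^2 = 0 := by
        have hexp : ∑ k, (E r k u - E r k v)^2
            = E r u u - 2 * E r u v + E r v v := by
          rw [huu r, huv r, hvv r, Finset.mul_sum, ← Finset.sum_sub_distrib,
            ← Finset.sum_add_distrib]
          exact Finset.sum_congr rfl fun k _ => by ring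
        rw [hexp, hc, ← heq]; ring
      have := (Finset.sum_eq_zero_iff_of_nonneg (fun k _ => sq_nonneg _)).mp hsumz i
        (Finset.mem_univ i)
      have := sub_eq_zero.mp (pow_eq_zero_iff (by norm_num) |>.mp this)
      linarith
    · right
      funext i
      simp only [Matrix.mulVec_single_one, Matrix.col_apply, Pi.neg_apply, mul_one]
      have hsumz : ∑ k, (E r k u + E r k v)^2 = 0 := by
        have hexp : ∑ k, (E r k u + E r k v)^2
            = E r u u + 2 * E r u v + E r v v := by
          rw [huu r, huv r, hvv r, Finset.mul_sum, ← Finset.sum_add_distrib,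
            ← Finset.sum_add_distrib]
          exact Finset.sum_congr rfl fun k _ => by ring
        rw [hexp, hc, ← heq]; ring
      have := (Finset.sum_eq_zero_iff_of_nonneg (fun k _ => sq_nonneg _)).mp hsumz i
        (Finset.mem_univ i)
      have := pow_eq_zero_iff (two_ne_zero) |>.mp this
      linarith
end
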